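/- arXiv:1305.6802 — 5 statements merged into one kernel-verified Lean document; each statement's English description precedes it below -/
import Mathlib

section
/- Consider the homogeneous firework process on ℕ. If the series ∑_{n=0}^∞ ∏_{i=0}^n G_N(P(R < i+1)) diverges (equals +∞), then the process dies out almost surely; moreover the quenched survival probability P(V | 𝒩 = n) equals 0 for μ-almost every environment n ∈ ℕ^ℕ. -/
open MeasureTheory ProbabilityTheory Filter Set

noncomputable section

/-- The effective radius at vertex `i`: `0` if there are no stations at `i`, and the maximum
of the radii of the stations at `i` otherwise. -/
def effRadius (station : ℕ → ℕ) (r : ℕ → ℕ → ℝ) (i : ℕ) : ℝ :=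
  if h : station i = 0 then 0
  else (Finset.range (station i)).sup'
    (by simpa [Finset.nonempty_range_iff] using h) (r i)

/-- The set of activated vertices of the firework process on `ℕ`:
`0` is active iff there is at least one station at `0`, and `m+1` is active iff there is an
active vertex `i ≤ m` whose effective radius is at least `m+1-i`. -/
inductive FireworkActive (station : ℕ → ℕ) (r : ℕ → ℕ → ℝ) : ℕ → Prop
  | zero : 1 ≤ station 0 → FireworkActive station r 0
  | succ (i m : ℕ) : i ≤ m → FireworkActive station r i →
      ((m : ℝ) + 1 - (i : ℝ) ≤ effRadius station r i) → FireworkActive station r (m + 1)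

/-- Survival of the firework process: infinitely many vertices are activated. -/
def fireworkSurvives (station : ℕ → ℕ) (r : ℕ → ℕ → ℝ) : Prop :=
  {m : ℕ | FireworkActive station r m}.Infinite

/-- The probability generating function `G(t) = E[t^N]` of a law on `ℕ`. -/
def pgf (PN : Measure ℕ) (t : ℝ) : ℝ :=
  ∑' k : ℕ, (PN {k}).toReal * t ^ k

/-! ### Auxiliary material for the proof -/

open scoped ENNReal

section FireworkAux

/-- The underlying product space. -/
abbrev ΩF := (ℕ → ℕ) × (ℕ → ℕ → ℝ)

/- ## Deterministic structure of the process -/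

lemma effRadius_lt_iff (stn : ℕ → ℕ) (r : ℕ → ℕ → ℝ) (i : ℕ) {t : ℝ} (ht : 0 < t) :
    effRadius stn r i < t ↔ ∀ j < stn i, r i j < t := by
  unfold effRadius
  split_ifs with h
  · simp [h, ht]
  · rw [Finset.sup'_lt_iff]
    simp

lemma active_cover {stn : ℕ → ℕ} {r : ℕ → ℕ → ℝ} {m : ℕ} (h : FireworkActive stn r m) :
    ∀ k, k < m → ∃ i ≤ k, (k : ℝ) + 1 - (i : ℝ) ≤ effRadius stn r i := by
  induction h with
  | zero _ => intro k hk; omega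
  | succ i m him hact hrad ih =>
      intro k hk
      rcases lt_or_ge k i with h' | h'
      · exact ih k h'
      · refine ⟨i, h', le_trans ?_ hrad⟩
        have : (k : ℝ) ≤ (m : ℝ) := Nat.cast_le.mpr (Nat.lt_succ_iff.mp hk)
        linarith

lemma surv_not_bev {stn : ℕ → ℕ} {r : ℕ → ℕ → ℝ} (h : fireworkSurvives stn r) (n : ℕ) :
    ¬ (∀ i ≤ n, ∀ j < stn i, r i j < (n : ℝ) + 1 - (i : ℝ)) := by
  intro hb
  obtain ⟨m, hm, hnm⟩ : ∃ m, FireworkActive stn r m ∧ n < m := by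
    by_contra hc
    push_neg at hc
    exact h (Set.Finite.subset (Set.finite_Iic n) fun m hm => hc m hm)
  obtain ⟨i, hin, hle⟩ := active_cover hm n hnm
  have hicast : (i : ℝ) ≤ (n : ℝ) := Nat.cast_le.mpr hin
  have ht : (0 : ℝ) < (n : ℝ) + 1 - (i : ℝ) := by linarith
  have := (effRadius_lt_iff stn r i ht).2 (hb i hin)
  linarith

/- ## σ-algebras generated by the coordinates -/

def coordMS : ℕ ⊕ ℕ × ℕ → MeasurableSpace ΩF
  | Sum.inl i => MeasurableSpace.comap (fun ω : ΩF => ω.1 i) inferInstance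
  | Sum.inr p => MeasurableSpace.comap (fun ω : ΩF => ω.2 p.1 p.2) inferInstance

lemma coordMS_le : ∀ x, coordMS x ≤ (inferInstance : MeasurableSpace ΩF)
  | Sum.inl i => Measurable.comap_le ((measurable_pi_apply i).comp measurable_fst)
  | Sum.inr p =>
      Measurable.comap_le ((measurable_pi_apply p.2).comp
        ((measurable_pi_apply p.1).comp measurable_snd))

def siteEv (i : ℕ) (t : ℝ) : Set ΩF := {ω : ΩF | ∀ j < ω.1 i, ω.2 i j < t}

def sumSites (I : Set ℕ) : Set (ℕ ⊕ ℕ × ℕ) := {x | Sum.elim id Prod.fst x ∈ I}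

def blockMS (I : Set ℕ) : MeasurableSpace ΩF := ⨆ x ∈ sumSites I, coordMS x

lemma blockMS_le (I : Set ℕ) : blockMS I ≤ (inferInstance : MeasurableSpace ΩF) :=
  iSup₂_le fun x _ => coordMS_le x

lemma siteEv_eq_iUnion (i : ℕ) (t : ℝ) :
    siteEv i t
      = ⋃ k : ℕ, ({ω : ΩF | ω.1 i = k} ∩ ⋂ j ∈ Finset.range k, {ω : ΩF | ω.2 i j < t}) := by
  ext ω
  simp only [siteEv, Set.mem_setOf_eq, Set.mem_iUnion, Set.mem_inter_iff, Set.mem_iInter,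
    Finset.mem_range]
  constructor
  · intro h
    exact ⟨ω.1 i, rfl, fun j hj => h j hj⟩
  · rintro ⟨k, hk, h⟩ j hj
    exact h j (hk ▸ hj)

lemma stnEq_mem_blockMS {I : Set ℕ} {i : ℕ} (hi : i ∈ I) (k : ℕ) :
    MeasurableSet[blockMS I] {ω : ΩF | ω.1 i = k} :=
  le_biSup coordMS (show Sum.inl i ∈ sumSites I from hi) _
    ⟨{k}, MeasurableSet.singleton k, rfl⟩

lemma rLt_mem_blockMS {I : Set ℕ} {i : ℕ} (hi : i ∈ I) (j : ℕ) (t : ℝ) :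
    MeasurableSet[blockMS I] {ω : ΩF | ω.2 i j < t} :=
  le_biSup coordMS (show Sum.inr (i, j) ∈ sumSites I from hi) _
    ⟨Set.Iio t, measurableSet_Iio, rfl⟩

lemma siteEv_mem_blockMS {I : Set ℕ} {i : ℕ} (hi : i ∈ I) (t : ℝ) :
    MeasurableSet[blockMS I] (siteEv i t) := by
  rw [siteEv_eq_iUnion]
  refine MeasurableSet.iUnion fun k => (stnEq_mem_blockMS hi k).inter ?_
  exact MeasurableSet.biInter (Finset.range k).countable_toSet
    fun j _ => rLt_mem_blockMS hi j t

lemma siteEv_measurableSet (i : ℕ) (t : ℝ) : MeasurableSet (siteEv i t) :=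
  blockMS_le Set.univ _ (siteEv_mem_blockMS (Set.mem_univ i) t)

/- ## The covering events -/

def Bev (n : ℕ) : Set ΩF := ⋂ i ∈ Finset.range (n + 1), siteEv i ((n : ℝ) + 1 - (i : ℝ))

lemma Bev_mem_blockMS {m n : ℕ} (hnm : n ≤ m) : MeasurableSet[blockMS (Set.Iic m)] (Bev n) :=
  MeasurableSet.biInter (Finset.range (n + 1)).countable_toSet fun i hi =>
    siteEv_mem_blockMS (show i ∈ Set.Iic m by
      have h' : i ∈ Finset.range (n + 1) := hi
      rw [Finset.mem_range] at h'
      exact Set.mem_Iic.mpr (by omega)) _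

lemma Bev_measurableSet (n : ℕ) : MeasurableSet (Bev n) :=
  blockMS_le _ _ (Bev_mem_blockMS le_rfl)

def TmSet (m : ℕ) : Set ΩF := Bev m \ ⋃ (m' : ℕ) (_ : m' < m), Bev m'

def BBlock (m n : ℕ) : Set ΩF := ⋂ i ∈ Finset.Ioc m n, siteEv i ((n : ℝ) + 1 - (i : ℝ))

lemma TmSet_mem_blockMS (m : ℕ) : MeasurableSet[blockMS (Set.Iic m)] (TmSet m) := by
  refine (Bev_mem_blockMS le_rfl).diff ?_
  exact MeasurableSet.biUnion (Set.to_countable _) fun m' hm' =>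
    Bev_mem_blockMS (by exact Nat.le_of_succ_le hm')

lemma TmSet_measurableSet (m : ℕ) : MeasurableSet (TmSet m) :=
  blockMS_le _ _ (TmSet_mem_blockMS m)

lemma TmSet_disjoint : Pairwise (Function.onFun Disjoint TmSet) := by
  intro a b hab
  wlog h : a < b generalizing a b
  · exact (this hab.symm (by omega)).symm
  rw [Function.onFun, Set.disjoint_left]
  rintro x ⟨hxa, -⟩ ⟨-, hxb⟩
  exact hxb (Set.mem_biUnion h hxa)

lemma Bev_subset_iUnion_TmSet (n : ℕ) : Bev n ⊆ ⋃ m ∈ Finset.range (n + 1), TmSet m := by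
  intro x hx
  have hex : ∃ m, x ∈ Bev m := ⟨n, hx⟩
  classical
  have hfind := Nat.find_spec hex
  have hle : Nat.find hex ≤ n := Nat.find_le hx
  refine Set.mem_iUnion₂.mpr ⟨Nat.find hex, Finset.mem_range.mpr (Nat.lt_succ_of_le hle),
    hfind, ?_⟩
  simp only [Set.mem_iUnion, not_exists]
  exact fun m' hm' => Nat.find_min hex hm'

lemma Bev_subset_BBlock {m n : ℕ} : Bev n ⊆ BBlock m n := by
  intro ω hω
  refine Set.mem_iInter₂.mpr fun i hi => ?_
  refine Set.mem_iInter₂.mp hω i ?_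
  rw [Finset.mem_Ioc] at hi
  exact Finset.mem_range.mpr (by omega)

/- ## Independence -/

section Meas

variable {PN : Measure ℕ} {PR : Measure ℝ} [IsProbabilityMeasure PN] [IsProbabilityMeasure PR]
variable {μ : Measure (ℕ → ℕ)} {ν : Measure (ℕ → ℕ → ℝ)}
  [IsProbabilityMeasure μ] [IsProbabilityMeasure ν]

lemma iIndep_coord
    (hNindep : iIndepFun (fun (i : ℕ) (f : ℕ → ℕ) => f i) μ)
    (hRindep : iIndepFun
      (fun (p : ℕ × ℕ) (r : ℕ → ℕ → ℝ) => r p.1 p.2) ν) :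
    iIndep coordMS (μ.prod ν) := by
  classical
  rw [iIndep_iff]
  intro u f hf
  have hL : ∀ i : ℕ, ∃ B : Set ℕ, Sum.inl i ∈ u →
      MeasurableSet B ∧ (fun ω : ΩF => ω.1 i) ⁻¹' B = f (Sum.inl i) := by
    intro i
    by_cases hi : Sum.inl i ∈ u
    · obtain ⟨B, hB, hBe⟩ := MeasurableSpace.measurableSet_comap.mp (hf _ hi)
      exact ⟨B, fun _ => ⟨hB, hBe⟩⟩
    · exact ⟨univ, fun h => absurd h hi⟩
  have hRs : ∀ p : ℕ × ℕ, ∃ B : Set ℝ, Sum.inr p ∈ u →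
      MeasurableSet B ∧ (fun ω : ΩF => ω.2 p.1 p.2) ⁻¹' B = f (Sum.inr p) := by
    intro p
    by_cases hp : Sum.inr p ∈ u
    · obtain ⟨B, hB, hBe⟩ := MeasurableSpace.measurableSet_comap.mp (hf _ hp)
      exact ⟨B, fun _ => ⟨hB, hBe⟩⟩
    · exact ⟨univ, fun h => absurd h hp⟩
  choose gL hgL using hL
  choose gR hgR using hRs
  set X : Set (ℕ → ℕ) := ⋂ i ∈ u.toLeft, (fun st : ℕ → ℕ => st i) ⁻¹' gL i with hX
  set Y : Set (ℕ → ℕ → ℝ) := ⋂ p ∈ u.toRight, (fun r : ℕ → ℕ → ℝ => r p.1 p.2) ⁻¹' gR p with hY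
  have hinter : (⋂ x ∈ u, f x) = X ×ˢ Y := by
    ext ω
    simp only [Set.mem_iInter, hX, hY, Set.mem_prod, Finset.mem_toLeft, Finset.mem_toRight]
    constructor
    · intro h
      refine ⟨fun i hi => ?_, fun p hp => ?_⟩
      · have h' := h _ hi
        rw [← (hgL i hi).2] at h'
        exact h'
      · have h' := h _ hp
        rw [← (hgR p hp).2] at h'
        exact h'
    · rintro ⟨h1, h2⟩ x hx
      match x with
      | Sum.inl i =>
          rw [← (hgL i hx).2]
          exact h1 i hx
      | Sum.inr p =>
          rw [← (hgR p hx).2]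
          exact h2 p hx
  have hXmeas : μ X = ∏ i ∈ u.toLeft, μ ((fun st : ℕ → ℕ => st i) ⁻¹' gL i) := by
    refine hNindep.meas_biInter (fun i hi => ?_)
    exact ⟨gL i, ((hgL i (Finset.mem_toLeft.mp hi)).1), rfl⟩
  have hYmeas : ν Y = ∏ p ∈ u.toRight, ν ((fun r : ℕ → ℕ → ℝ => r p.1 p.2) ⁻¹' gR p) := by
    refine hRindep.meas_biInter (fun p hp => ?_)
    exact ⟨gR p, ((hgR p (Finset.mem_toRight.mp hp)).1), rfl⟩
  have hfL : ∀ i ∈ u.toLeft, (μ.prod ν) (f (Sum.inl i))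
      = μ ((fun st : ℕ → ℕ => st i) ⁻¹' gL i) := by
    intro i hi
    rw [← (hgL i (Finset.mem_toLeft.mp hi)).2]
    have : (fun ω : ΩF => ω.1 i) ⁻¹' gL i
        = ((fun st : ℕ → ℕ => st i) ⁻¹' gL i) ×ˢ (univ : Set (ℕ → ℕ → ℝ)) := by
      ext ω; simp [Set.mem_prod]
    rw [this, Measure.prod_prod, measure_univ, mul_one]
  have hfR : ∀ p ∈ u.toRight, (μ.prod ν) (f (Sum.inr p))
      = ν ((fun r : ℕ → ℕ → ℝ => r p.1 p.2) ⁻¹' gR p) := by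
    intro p hp
    rw [← (hgR p (Finset.mem_toRight.mp hp)).2]
    have : (fun ω : ΩF => ω.2 p.1 p.2) ⁻¹' gR p
        = (univ : Set (ℕ → ℕ)) ×ˢ ((fun r : ℕ → ℕ → ℝ => r p.1 p.2) ⁻¹' gR p) := by
      ext ω; simp [Set.mem_prod]
    rw [this, Measure.prod_prod, measure_univ, one_mul]
  calc (μ.prod ν) (⋂ x ∈ u, f x) = μ X * ν Y := by rw [hinter, Measure.prod_prod]
    _ = (∏ i ∈ u.toLeft, (μ.prod ν) (f (Sum.inl i)))
        * ∏ p ∈ u.toRight, (μ.prod ν) (f (Sum.inr p)) := by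
        rw [hXmeas, hYmeas, Finset.prod_congr rfl hfL, Finset.prod_congr rfl hfR]
    _ = ∏ x ∈ u, (μ.prod ν) (f x) := by
        conv_rhs => rw [← Finset.toLeft_disjSum_toRight (u := u)]
        rw [Finset.prod_disjSum]

lemma indep_blocks
    (hNindep : iIndepFun (fun (i : ℕ) (f : ℕ → ℕ) => f i) μ)
    (hRindep : iIndepFun
      (fun (p : ℕ × ℕ) (r : ℕ → ℕ → ℝ) => r p.1 p.2) ν)
    {I J : Set ℕ} (hIJ : Disjoint I J) :
    Indep (blockMS I) (blockMS J) (μ.prod ν) := by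
  refine indep_iSup_of_disjoint coordMS_le (iIndep_coord hNindep hRindep) ?_
  rw [Set.disjoint_left]
  intro x hxI hxJ
  exact Set.disjoint_left.mp hIJ hxI hxJ

/- ## Computation of the probabilities -/

lemma siteEv_measure (hNlaw : ∀ i : ℕ, μ.map (fun f => f i) = PN)
    (hRlaw : ∀ p : ℕ × ℕ, ν.map (fun r => r p.1 p.2) = PR)
    (hRindep : iIndepFun
      (fun (p : ℕ × ℕ) (r : ℕ → ℕ → ℝ) => r p.1 p.2) ν)
    (i : ℕ) (t : ℝ) :
    (μ.prod ν) (siteEv i t) = ∑' k : ℕ, PN {k} * PR (Set.Iio t) ^ k := by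
  classical
  have hpiece : ∀ k : ℕ,
      ({ω : ΩF | ω.1 i = k} ∩ ⋂ j ∈ Finset.range k, {ω : ΩF | ω.2 i j < t})
      = ((fun st : ℕ → ℕ => st i) ⁻¹' {k}) ×ˢ
        (⋂ p ∈ (Finset.range k).image (fun j => (i, j)),
          (fun r : ℕ → ℕ → ℝ => r p.1 p.2) ⁻¹' Set.Iio t) := by
    intro k; ext ω
    simp only [Set.mem_inter_iff, Set.mem_setOf_eq, Set.mem_iInter, Finset.mem_range,
      Set.mem_prod, Set.mem_preimage, Set.mem_singleton_iff, Finset.mem_image]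
    constructor
    · rintro ⟨h1, h2⟩
      exact ⟨h1, by rintro p ⟨j, hj, rfl⟩; exact h2 j hj⟩
    · rintro ⟨h1, h2⟩
      exact ⟨h1, fun j hj => h2 (i, j) ⟨j, hj, rfl⟩⟩
  rw [siteEv_eq_iUnion i t, measure_iUnion]
  · refine tsum_congr fun k => ?_
    rw [hpiece, Measure.prod_prod]
    congr 1
    · rw [← hNlaw i, Measure.map_apply (measurable_pi_apply i) (MeasurableSet.singleton k)]
    · have hmeas : ∀ p ∈ (Finset.range k).image (fun j => (i, j)),
          MeasurableSet[MeasurableSpace.comap (fun r : ℕ → ℕ → ℝ => r p.1 p.2) inferInstance]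
            ((fun r : ℕ → ℕ → ℝ => r p.1 p.2) ⁻¹' Set.Iio t) :=
        fun p _ => ⟨Set.Iio t, measurableSet_Iio, rfl⟩
      rw [hRindep.meas_biInter hmeas]
      have hval : ∀ p ∈ (Finset.range k).image (fun j => (i, j)),
          ν ((fun r : ℕ → ℕ → ℝ => r p.1 p.2) ⁻¹' Set.Iio t) = PR (Set.Iio t) := by
        intro p _
        have hm : Measurable fun r : ℕ → ℕ → ℝ => r p.1 p.2 :=
          (measurable_pi_apply p.2).comp (measurable_pi_apply p.1)
        rw [← hRlaw p, Measure.map_apply hm measurableSet_Iio]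
      rw [Finset.prod_congr rfl hval, Finset.prod_const,
        Finset.card_image_of_injective _ (fun a b h => by simpa using h), Finset.card_range]
  · intro k l hkl
    rw [Function.onFun, Set.disjoint_left]
    rintro ω ⟨h1, -⟩ ⟨h2, -⟩
    exact hkl (h1 ▸ h2)
  · intro k
    rw [hpiece]
    refine MeasurableSet.prod (measurable_pi_apply i (MeasurableSet.singleton k)) ?_
    refine MeasurableSet.biInter (Finset.countable_toSet _) fun p _ => ?_
    have hm : Measurable fun r : ℕ → ℕ → ℝ => r p.1 p.2 :=
      (measurable_pi_apply p.2).comp (measurable_pi_apply p.1)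
    exact hm measurableSet_Iio

lemma biInter_siteEv_measure
    (hNindep : iIndepFun (fun (i : ℕ) (f : ℕ → ℕ) => f i) μ)
    (hRindep : iIndepFun
      (fun (p : ℕ × ℕ) (r : ℕ → ℕ → ℝ) => r p.1 p.2) ν)
    (s : Finset ℕ) (t : ℕ → ℝ) :
    (μ.prod ν) (⋂ i ∈ s, siteEv i (t i)) = ∏ i ∈ s, (μ.prod ν) (siteEv i (t i)) := by
  classical
  induction s using Finset.induction_on with
  | empty => simp
  | @insert a s ha ih =>
    rw [Finset.set_biInter_insert, Finset.prod_insert ha, ← ih]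
    have hind := indep_blocks hNindep hRindep (I := {a}) (J := ↑s)
      (Set.disjoint_singleton_left.mpr (by exact_mod_cast ha))
    have h1 : MeasurableSet[blockMS {a}] (siteEv a (t a)) :=
      siteEv_mem_blockMS (Set.mem_singleton a) _
    have h2 : MeasurableSet[blockMS ↑s] (⋂ i ∈ s, siteEv i (t i)) :=
      MeasurableSet.biInter s.countable_toSet fun i hi => siteEv_mem_blockMS hi _
    exact (Indep_iff _ _ _).mp hind _ _ h1 h2

/- ## The sequence `A n` -/

def cgfE (PN : Measure ℕ) (PR : Measure ℝ) (i : ℕ) : ℝ≥0∞ :=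
  ∑' k : ℕ, PN {k} * PR (Set.Iio ((i : ℝ) + 1)) ^ k

def Aseq (PN : Measure ℕ) (PR : Measure ℝ) (n : ℕ) : ℝ≥0∞ :=
  ∏ i ∈ Finset.range (n + 1), cgfE PN PR i

lemma tsum_PN_singleton : ∑' k : ℕ, PN {k} = 1 := by
  rw [← measure_univ (μ := PN), ← Set.iUnion_of_singleton ℕ]
  exact (measure_iUnion (fun a b hab => by simpa [Function.onFun] using hab)
    fun k => measurableSet_singleton k).symm

lemma cgfE_le_one (i : ℕ) : cgfE PN PR i ≤ 1 := by
  calc cgfE PN PR i ≤ ∑' k : ℕ, PN {k} * 1 :=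
        ENNReal.tsum_le_tsum fun k => mul_le_mul_right (pow_le_one' prob_le_one k) _
    _ = 1 := by simpa using tsum_PN_singleton (PN := PN)

lemma Aseq_le_one (n : ℕ) : Aseq PN PR n ≤ 1 :=
  Finset.prod_le_one (fun _ _ => zero_le) (fun i _ => cgfE_le_one i)

lemma Aseq_ne_top (n : ℕ) : Aseq PN PR n ≠ ⊤ :=
  ne_top_of_le_ne_top ENNReal.one_ne_top (Aseq_le_one n)

lemma Aseq_toReal (n : ℕ) :
    (Aseq PN PR n).toReal
      = ∏ i ∈ Finset.range (n + 1), pgf PN ((PR (Set.Iio ((i : ℝ) + 1))).toReal) := by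
  rw [Aseq, ENNReal.toReal_prod]
  refine Finset.prod_congr rfl fun i _ => ?_
  rw [cgfE, ENNReal.tsum_toReal_eq
    (fun k => ENNReal.mul_ne_top (measure_ne_top _ _)
      (ENNReal.pow_ne_top (measure_ne_top _ _))), pgf]
  exact tsum_congr fun k => by rw [ENNReal.toReal_mul, ENNReal.toReal_pow]

variable (hNlaw : ∀ i : ℕ, μ.map (fun f => f i) = PN)
    (hRlaw : ∀ p : ℕ × ℕ, ν.map (fun r => r p.1 p.2) = PR)
    (hNindep : iIndepFun (fun (i : ℕ) (f : ℕ → ℕ) => f i) μ)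
    (hRindep : iIndepFun
      (fun (p : ℕ × ℕ) (r : ℕ → ℕ → ℝ) => r p.1 p.2) ν)

include hNlaw hRlaw hNindep hRindep

lemma siteEv_measure_cgf {i n : ℕ} (hin : i ≤ n) :
    (μ.prod ν) (siteEv i ((n : ℝ) + 1 - (i : ℝ))) = cgfE PN PR (n - i) := by
  rw [siteEv_measure hNlaw hRlaw hRindep]
  have hcast : ((n - i : ℕ) : ℝ) + 1 = (n : ℝ) + 1 - (i : ℝ) := by
    have : (i : ℝ) ≤ (n : ℝ) := Nat.cast_le.mpr hin
    push_cast [Nat.cast_sub hin]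
    ring
  rw [cgfE, hcast]

lemma Bev_measure (n : ℕ) : (μ.prod ν) (Bev n) = Aseq PN PR n := by
  rw [Bev, biInter_siteEv_measure hNindep hRindep]
  rw [Finset.prod_congr rfl (fun i hi =>
    siteEv_measure_cgf hNlaw hRlaw hNindep hRindep (Nat.lt_succ_iff.mp (Finset.mem_range.mp hi)))]
  have := Finset.prod_range_reflect (cgfE PN PR) (n + 1)
  simpa [Aseq] using this

lemma BBlock_measure {m n : ℕ} (h : m < n) :
    (μ.prod ν) (BBlock m n) = Aseq PN PR (n - m - 1) := by
  rw [BBlock, biInter_siteEv_measure hNindep hRindep]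
  rw [Finset.prod_congr rfl (fun i hi =>
    siteEv_measure_cgf hNlaw hRlaw hNindep hRindep (Finset.mem_Ioc.mp hi).2)]
  rw [Aseq]
  refine Finset.prod_nbij' (fun i => n - i) (fun j => n - j) ?_ ?_ ?_ ?_ ?_
  · intro a ha
    simp only [Finset.mem_Ioc] at ha
    simp only [Finset.mem_range]
    omega
  · intro a ha
    simp only [Finset.mem_range] at ha
    simp only [Finset.mem_Ioc]
    omega
  · intro a ha
    simp only [Finset.mem_Ioc] at ha
    omega
  · intro a ha
    simp only [Finset.mem_range] at ha
    omega
  · intro a _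
    rfl

lemma Tm_inter_BBlock_measure {m n : ℕ} (h : m < n) :
    (μ.prod ν) (TmSet m ∩ BBlock m n)
      = (μ.prod ν) (TmSet m) * (μ.prod ν) (BBlock m n) := by
  have hdisj : Disjoint (Set.Iic m) (↑(Finset.Ioc m n) : Set ℕ) := by
    rw [Set.disjoint_left]
    intro x hx hx'
    have h1 : x ≤ m := Set.mem_Iic.mp hx
    have h2 : m < x := (Finset.mem_Ioc.mp (by exact_mod_cast hx')).1
    omega
  have hind := indep_blocks hNindep hRindep hdisj
  have h1 := TmSet_mem_blockMS m
  have h2 : MeasurableSet[blockMS ↑(Finset.Ioc m n)] (BBlock m n) :=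
    MeasurableSet.biInter (Finset.countable_toSet _) fun i hi => siteEv_mem_blockMS hi _
  exact (Indep_iff _ _ _).mp hind _ _ h1 h2

end Meas

end FireworkAux

/-- **Theorem 2(1)**: for the homogeneous firework process on `ℕ`, if
`∑_n ∏_{i=0}^n G_N(P(R < i+1)) = +∞` then the process dies out almost surely and the
quenched survival probability is `0` for `μ`-almost every environment. -/
theorem firework_extinction_of_divergence
    (PN : Measure ℕ) (PR : Measure ℝ)
    [IsProbabilityMeasure PN] [IsProbabilityMeasure PR]
    (μ : Measure (ℕ → ℕ)) (ν : Measure (ℕ → ℕ → ℝ))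
    [IsProbabilityMeasure μ] [IsProbabilityMeasure ν]
    -- the station numbers are i.i.d. with law `PN`
    (hNlaw : ∀ i : ℕ, μ.map (fun f => f i) = PN)
    (hNindep : iIndepFun (fun (i : ℕ) (f : ℕ → ℕ) => f i) μ)
    -- the radii are i.i.d. with law `PR`
    (hRlaw : ∀ p : ℕ × ℕ, ν.map (fun r => r p.1 p.2) = PR)
    (hRindep : iIndepFun
      (fun (p : ℕ × ℕ) (r : ℕ → ℕ → ℝ) => r p.1 p.2) ν)
    -- the radii take values in `[0, ∞)` and `P(R < 1) ∈ (0,1)`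
    (hRnonneg : PR (Set.Iio (0 : ℝ)) = 0)
    (hR1 : 0 < PR (Set.Iio (1 : ℝ)) ∧ PR (Set.Iio (1 : ℝ)) < 1)
    -- divergence of the series `∑_n ∏_{i=0}^n G_N(P(R < i+1))`
    (hdiv : ¬ Summable (fun n : ℕ =>
      ∏ i ∈ Finset.range (n + 1), pgf PN ((PR (Set.Iio ((i : ℝ) + 1))).toReal))) :
    (μ.prod ν) {p : (ℕ → ℕ) × (ℕ → ℕ → ℝ) | fireworkSurvives p.1 p.2} = 0 ∧
    ∀ᵐ stn ∂μ, ν {r | fireworkSurvives stn r} = 0 := by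
  classical
  set A : ℕ → ℝ≥0∞ := Aseq PN PR with hA
  have hBevM : ∀ n, (μ.prod ν) (Bev n) = A n :=
    fun n => Bev_measure hNlaw hRlaw hNindep hRindep n
  -- divergence of partial sums in `ℝ`
  have hAr : ∀ n, (A n).toReal
      = ∏ i ∈ Finset.range (n + 1), pgf PN ((PR (Set.Iio ((i : ℝ) + 1))).toReal) :=
    fun n => Aseq_toReal n
  have hnsum : ¬ Summable fun n => (A n).toReal := by
    rw [funext hAr]
    exact hdiv
  have htend : Tendsto (fun N => ∑ n ∈ Finset.range N, (A n).toReal) atTop atTop :=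
    (not_summable_iff_tendsto_nat_atTop_of_nonneg fun n => ENNReal.toReal_nonneg).mp hnsum
  -- the key inequality
  set q : ℝ≥0∞ := (μ.prod ν) (⋃ n, Bev n) with hqdef
  have hqle : q ≤ 1 := prob_le_one
  have hqtop : q ≠ ⊤ := ne_top_of_le_ne_top ENNReal.one_ne_top hqle
  have key : ∀ N, (∑ n ∈ Finset.range N, A n)
      ≤ q * (1 + ∑ n ∈ Finset.range N, A n) := by
    intro N
    have hTmle : ∑ m ∈ Finset.range N, (μ.prod ν) (TmSet m) ≤ q := by
      rw [← measure_biUnion_finset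
        (fun a _ b _ hab => TmSet_disjoint hab) (fun m _ => TmSet_measurableSet m)]
      refine measure_mono (Set.iUnion₂_subset fun m _ => ?_)
      exact subset_trans Set.diff_subset (Set.subset_iUnion Bev m)
    have hdec : ∀ n, (μ.prod ν) (Bev n)
        = ∑ m ∈ Finset.range (n + 1), (μ.prod ν) (Bev n ∩ TmSet m) := by
      intro n
      have hcover : Bev n = ⋃ m ∈ Finset.range (n + 1), (Bev n ∩ TmSet m) := by
        apply Set.Subset.antisymm
        · intro x hx
          obtain ⟨m, hm, hxm⟩ := Set.mem_iUnion₂.mp (Bev_subset_iUnion_TmSet n hx)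
          exact Set.mem_iUnion₂.mpr ⟨m, hm, hx, hxm⟩
        · exact Set.iUnion₂_subset fun m _ => Set.inter_subset_left
      conv_lhs => rw [hcover]
      exact measure_biUnion_finset
        (fun a ha b hb hab => ((TmSet_disjoint hab).mono
          Set.inter_subset_right Set.inter_subset_right))
        (fun m _ => (Bev_measurableSet n).inter (TmSet_measurableSet m))
    have hbound : ∀ m n : ℕ, m ≤ n → (μ.prod ν) (Bev n ∩ TmSet m)
        ≤ (μ.prod ν) (TmSet m) * (if m = n then 1 else A (n - m - 1)) := by
      intro m n hmn
      rcases eq_or_lt_of_le hmn with rfl | hlt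
      · rw [if_pos rfl, mul_one]
        exact measure_mono Set.inter_subset_right
      · rw [if_neg (by omega)]
        calc (μ.prod ν) (Bev n ∩ TmSet m)
            ≤ (μ.prod ν) (TmSet m ∩ BBlock m n) := by
              refine measure_mono ?_
              rw [Set.inter_comm]
              exact Set.inter_subset_inter_right _ Bev_subset_BBlock
          _ = (μ.prod ν) (TmSet m) * (μ.prod ν) (BBlock m n) :=
              Tm_inter_BBlock_measure hNlaw hRlaw hNindep hRindep hlt
          _ = (μ.prod ν) (TmSet m) * A (n - m - 1) := by
              rw [BBlock_measure hNlaw hRlaw hNindep hRindep hlt]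
    calc (∑ n ∈ Finset.range N, A n)
        = ∑ n ∈ Finset.range N, ∑ m ∈ Finset.range (n + 1),
            (μ.prod ν) (Bev n ∩ TmSet m) := by
          refine Finset.sum_congr rfl fun n _ => ?_
          rw [← hBevM n, hdec n]
      _ ≤ ∑ n ∈ Finset.range N, ∑ m ∈ Finset.range (n + 1),
            (μ.prod ν) (TmSet m) * (if m = n then 1 else A (n - m - 1)) := by
          refine Finset.sum_le_sum fun n _ => Finset.sum_le_sum fun m hm => ?_
          exact hbound m n (Nat.lt_succ_iff.mp (Finset.mem_range.mp hm))
      _ = ∑ m ∈ Finset.range N, ∑ n ∈ Finset.Ico m N,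
            (μ.prod ν) (TmSet m) * (if m = n then 1 else A (n - m - 1)) := by
          refine Finset.sum_comm' fun n m => ?_
          simp only [Finset.mem_range, Finset.mem_Ico]
          omega
      _ ≤ ∑ m ∈ Finset.range N, (μ.prod ν) (TmSet m)
            * (1 + ∑ n ∈ Finset.range N, A n) := by
          refine Finset.sum_le_sum fun m hm => ?_
          rw [← Finset.mul_sum]
          refine mul_le_mul_right ?_ _
          have hmN : m < N := Finset.mem_range.mp hm
          rw [← Finset.insert_Ico_add_one_left_eq_Ico hmN, Finset.sum_insert (by simp)]
          rw [if_pos rfl]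
          refine add_le_add_right ?_ _
          have hsum_eq : ∑ n ∈ Finset.Ico (m + 1) N,
              (if m = n then (1 : ℝ≥0∞) else A (n - m - 1))
              = ∑ j ∈ Finset.range (N - (m + 1)), A j := by
            refine Finset.sum_nbij' (fun n => n - m - 1) (fun j => j + m + 1)
              ?_ ?_ ?_ ?_ ?_
            · intro a ha
              simp only [Finset.mem_Ico] at ha
              simp only [Finset.mem_range]
              omega
            · intro a ha
              simp only [Finset.mem_range] at ha
              simp only [Finset.mem_Ico]
              omega
            · intro a ha
              simp only [Finset.mem_Ico] at ha
              omega
            · intro a ha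
              simp only [Finset.mem_range] at ha
              omega
            · intro a ha
              simp only [Finset.mem_Ico] at ha
              rw [if_neg (by omega)]
          rw [hsum_eq]
          refine Finset.sum_le_sum_of_subset ?_
          exact Finset.range_subset_range.mpr (by omega)
      _ = (∑ m ∈ Finset.range N, (μ.prod ν) (TmSet m))
            * (1 + ∑ n ∈ Finset.range N, A n) := by
          rw [Finset.sum_mul]
      _ ≤ q * (1 + ∑ n ∈ Finset.range N, A n) := mul_le_mul_left hTmle _
  -- conclude `q = 1`
  have hq1 : q = 1 := by
    by_contra hne
    have hqlt : q < 1 := lt_of_le_of_ne hqle hne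
    have hc1 : q.toReal < 1 := by
      rw [← ENNReal.toReal_one]
      exact (ENNReal.toReal_lt_toReal hqtop ENNReal.one_ne_top).mpr hqlt
    have hc0 : 0 ≤ q.toReal := ENNReal.toReal_nonneg
    have hbd : ∀ N, ∑ n ∈ Finset.range N, (A n).toReal ≤ q.toReal / (1 - q.toReal) := by
      intro N
      have hStop : (∑ n ∈ Finset.range N, A n) ≠ ⊤ :=
        (ENNReal.sum_lt_top.mpr fun n _ => (Aseq_ne_top n).lt_top).ne
      have hRHS : q * (1 + ∑ n ∈ Finset.range N, A n) ≠ ⊤ :=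
        ENNReal.mul_ne_top hqtop (by
          exact ENNReal.add_ne_top.mpr ⟨ENNReal.one_ne_top, hStop⟩)
      have h := ENNReal.toReal_mono hRHS (key N)
      rw [ENNReal.toReal_mul, ENNReal.toReal_add ENNReal.one_ne_top hStop, ENNReal.toReal_one] at h
      have hσ : (∑ n ∈ Finset.range N, A n).toReal
          = ∑ n ∈ Finset.range N, (A n).toReal :=
        ENNReal.toReal_sum fun n _ => Aseq_ne_top n
      rw [hσ] at h
      rw [le_div_iff₀ (by linarith : (0 : ℝ) < 1 - q.toReal)]
      nlinarith [h]
    obtain ⟨N, hN⟩ := (htend.eventually_gt_atTop (q.toReal / (1 - q.toReal))).exists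
    exact absurd (hbd N) (not_le.mpr hN)
  have hUmeas : MeasurableSet (⋃ n, Bev n) := MeasurableSet.iUnion fun n => Bev_measurableSet n
  have hcompl : (μ.prod ν) (⋃ n, Bev n)ᶜ = 0 :=
    (prob_compl_eq_zero_iff hUmeas).mpr hq1
  have hsub : {p : (ℕ → ℕ) × (ℕ → ℕ → ℝ) | fireworkSurvives p.1 p.2}
      ⊆ (⋃ n, Bev n)ᶜ := by
    intro ω hω
    simp only [Set.mem_compl_iff, Set.mem_iUnion, not_exists]
    intro n hn
    refine surv_not_bev hω n ?_
    intro i hi j hj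
    have hmem := Set.mem_iInter₂.mp hn i (Finset.mem_range.mpr (Nat.lt_succ_of_le hi))
    exact hmem j hj
  refine ⟨measure_mono_null hsub hcompl, ?_⟩
  have hae := (Measure.measure_prod_null (μ := μ) (ν := ν) hUmeas.compl).mp hcompl
  filter_upwards [hae] with stn h0
  simp only [Pi.zero_apply] at h0
  refine measure_mono_null ?_ h0
  intro r hr
  exact hsub hr

end
end

section
/- Consider the homogeneous firework process on ℕ. If liminf_{n→∞} n·(1 − G_N(P(R < n))) > 1, then P(V) > 0 and μ{n ∈ ℕ^ℕ : P(V | 𝒩 = n) > 0} = P(N > 0). -/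
open MeasureTheory ProbabilityTheory Filter Set
open scoped ENNReal NNReal

noncomputable section

/-! ### Auxiliary deterministic lemmas -/

lemma fw_active_one_le {s : ℕ → ℕ} {r : ℕ → ℕ → ℝ} {m : ℕ}
    (h : FireworkActive s r m) : 1 ≤ s 0 := by
  induction h with
  | zero h => exact h
  | succ i m him hact hr ih => exact ih

lemma fw_le_effRadius_iff {s : ℕ → ℕ} {r : ℕ → ℕ → ℝ} {i : ℕ} {t : ℝ} (ht : 0 < t) :
    t ≤ effRadius s r i ↔ ∃ j < s i, t ≤ r i j := by
  unfold effRadius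
  split_ifs with h
  · simp [h, not_le.2 ht]
  · rw [Finset.le_sup'_iff]
    simp [Finset.mem_range]

lemma fw_survives_of_good {s : ℕ → ℕ} {r : ℕ → ℕ → ℝ} (M : ℕ)
    (h0 : ((M : ℝ) + 1) ≤ effRadius s r 0)
    (hG : ∀ n : ℕ, M + 1 ≤ n → ∃ i, 1 ≤ i ∧ i ≤ n ∧ ((n : ℝ) + 1 - (i : ℝ) ≤ effRadius s r i)) :
    fireworkSurvives s r := by
  have hs0 : 1 ≤ s 0 := by
    obtain ⟨j, hj, -⟩ := (fw_le_effRadius_iff (by positivity)).1 h0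
    omega
  have hall : ∀ m, FireworkActive s r m := by
    intro m
    induction m using Nat.strong_induction_on with
    | _ m ih =>
      match m with
      | 0 => exact .zero hs0
      | Nat.succ k =>
        by_cases hk : k + 1 ≤ M + 1
        · refine .succ 0 k (Nat.zero_le _) (.zero hs0) ?_
          refine le_trans ?_ h0
          have : (k : ℝ) + 1 ≤ (M : ℝ) + 1 := by exact_mod_cast hk
          simpa using this
        · obtain ⟨i, hi1, hik, hle⟩ := hG k (by omega)
          exact .succ i k hik (ih i (by omega)) hle
  have huniv : {m : ℕ | FireworkActive s r m} = Set.univ := Set.eq_univ_of_forall hall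
  rw [fireworkSurvives, huniv]
  exact Set.infinite_univ

/-! ### Analysis lemma: summability of the products -/

lemma fw_tsum_prod_ne_top (qE : ℕ → ℝ≥0∞) (hq1 : ∀ k, qE k ≤ 1)
    (c : ℝ) (hc : 1 < c) (K : ℕ) (hK : 2 ≤ K)
    (hqk : ∀ k : ℕ, K ≤ k → qE k ≤ ENNReal.ofReal (1 - c / (k : ℝ))) :
    ∑' n : ℕ, ∏ k ∈ Finset.Icc 1 n, qE k ≠ ⊤ := by
  have hK1 : (0 : ℝ) ≤ (K : ℝ) - 1 := by
    have : (2 : ℝ) ≤ (K : ℝ) := by exact_mod_cast hK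
    linarith
  have hq2 : ∀ k : ℕ, K ≤ k → qE k ≤ ENNReal.ofReal ((((k : ℝ) - 1) / k) ^ c) := by
    intro k hk
    have hk0 : (0 : ℝ) < k := by
      have : 0 < k := by omega
      exact_mod_cast this
    refine (hqk k hk).trans (ENNReal.ofReal_le_ofReal ?_)
    have h1k : 1 / (k : ℝ) ≤ 1 := by
      rw [div_le_one hk0]
      have : 1 ≤ k := by omega
      exact_mod_cast this
    have hb := one_add_mul_self_le_rpow_one_add (s := -1 / (k : ℝ)) (p := c)
      (by rw [neg_div]; linarith) hc.le
    have he : 1 + -1 / (k : ℝ) = ((k : ℝ) - 1) / k := by field_simp; ring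
    rw [he] at hb
    calc 1 - c / (k : ℝ) = 1 + c * (-1 / (k : ℝ)) := by ring
    _ ≤ (((k : ℝ) - 1) / k) ^ c := hb
  have htel : ∀ n : ℕ, K ≤ n → ∏ k ∈ Finset.Icc K n, (((k : ℝ) - 1) / k) = ((K : ℝ) - 1) / n := by
    intro n hn
    induction n, hn using Nat.le_induction with
    | base => simp
    | succ n hn ih =>
      rw [Finset.prod_Icc_succ_top (by omega), ih]
      have h1 : (n : ℝ) ≠ 0 := by
        have : 0 < n := by omega
        positivity
      have h2 : ((n : ℝ) + 1) ≠ 0 := by positivity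
      push_cast
      field_simp
      try ring
  have hbound : ∀ n : ℕ, K ≤ n →
      (∏ k ∈ Finset.Icc 1 n, qE k) ≤ ENNReal.ofReal (((K : ℝ) - 1) ^ c * (((n : ℝ) ^ c))⁻¹) := by
    intro n hn
    have hnonneg : ∀ k ∈ Finset.Icc K n, (0 : ℝ) ≤ ((k : ℝ) - 1) / k := by
      intro k hk
      rw [Finset.mem_Icc] at hk
      have h2 : (2 : ℝ) ≤ (k : ℝ) := by exact_mod_cast le_trans hK hk.1
      apply div_nonneg <;> linarith
    have hIoc : Finset.Ioc (K-1) n = Finset.Icc K n := by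
      ext x
      simp only [Finset.mem_Ioc, Finset.mem_Icc]
      omega
    calc (∏ k ∈ Finset.Icc 1 n, qE k) = ∏ k ∈ Finset.Ioc 0 n, qE k := by
          rw [← Finset.Icc_add_one_left_eq_Ioc, zero_add]
    _ = (∏ k ∈ Finset.Ioc 0 (K-1), qE k) * ∏ k ∈ Finset.Ioc (K-1) n, qE k :=
          (Finset.prod_Ioc_consecutive _ (by omega) (by omega)).symm
    _ ≤ 1 * ∏ k ∈ Finset.Ioc (K-1) n, qE k :=
          mul_le_mul_left (Finset.prod_le_one' fun i _ => hq1 i) _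
    _ = ∏ k ∈ Finset.Icc K n, qE k := by
          rw [one_mul, hIoc]
    _ ≤ ∏ k ∈ Finset.Icc K n, ENNReal.ofReal ((((k : ℝ) - 1) / k) ^ c) :=
          Finset.prod_le_prod' fun k hk => hq2 k (Finset.mem_Icc.1 hk).1
    _ = ENNReal.ofReal (∏ k ∈ Finset.Icc K n, (((k : ℝ) - 1) / k) ^ c) :=
          (ENNReal.ofReal_prod_of_nonneg fun k hk => Real.rpow_nonneg (hnonneg k hk) c).symm
    _ = ENNReal.ofReal ((∏ k ∈ Finset.Icc K n, (((k : ℝ) - 1) / k)) ^ c) := by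
          rw [Real.finset_prod_rpow _ _ hnonneg c]
    _ = ENNReal.ofReal ((((K : ℝ) - 1) / n) ^ c) := by rw [htel n hn]
    _ = ENNReal.ofReal (((K : ℝ) - 1) ^ c * (((n : ℝ) ^ c))⁻¹) := by
          rw [Real.div_rpow hK1 (Nat.cast_nonneg n), div_eq_mul_inv]
  have hsummable : Summable (fun n : ℕ => ((K : ℝ) - 1) ^ c * (((n : ℝ) ^ c))⁻¹) :=
    (Real.summable_nat_rpow_inv.2 hc).mul_left _
  have hle : ∀ n : ℕ, (∏ k ∈ Finset.Icc 1 n, qE k) ≤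
      (if n < K then (1 : ℝ≥0∞) else 0) + ENNReal.ofReal (((K : ℝ) - 1) ^ c * (((n : ℝ) ^ c))⁻¹) := by
    intro n
    by_cases h : n < K
    · simp only [if_pos h]
      exact le_add_right (Finset.prod_le_one' fun i _ => hq1 i)
    · simp only [if_neg h, zero_add]
      exact hbound n (by omega)
  refine ne_top_of_le_ne_top ?_ (ENNReal.tsum_le_tsum hle)
  rw [ENNReal.tsum_add]
  refine ENNReal.add_ne_top.2 ⟨?_, ?_⟩
  · have h1 : (∑' n : ℕ, if n < K then (1 : ℝ≥0∞) else 0)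
        = ∑ n ∈ Finset.range K, if n < K then (1 : ℝ≥0∞) else 0 := by
      apply tsum_eq_sum
      intro b hb
      rw [Finset.mem_range] at hb
      simp [hb]
    rw [h1]
    have h2 : (∑ n ∈ Finset.range K, if n < K then (1:ℝ≥0∞) else 0)
        ≤ ∑ _n ∈ Finset.range K, (1:ℝ≥0∞) := by
      apply Finset.sum_le_sum
      intro i _
      split_ifs <;> simp
    have h3 : (∑ _n ∈ Finset.range K, (1:ℝ≥0∞)) = (K : ℝ≥0∞) := by simp
    exact ne_of_lt (lt_of_le_of_lt (h2.trans h3.le) (ENNReal.natCast_lt_top K))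
  · rw [← ENNReal.ofReal_tsum_of_nonneg (fun n => mul_nonneg (Real.rpow_nonneg hK1 c)
      (inv_nonneg.2 (Real.rpow_nonneg (Nat.cast_nonneg n) c))) hsummable]
    exact ENNReal.ofReal_ne_top

/-! ### Probability auxiliaries -/

lemma fw_eval_meas (p : ℕ × ℕ) : Measurable (fun r : ℕ → ℕ → ℝ => r p.1 p.2) :=
  (measurable_pi_apply p.2).comp (measurable_pi_apply p.1)

lemma fw_meas_g (g : ℕ → ℝ≥0∞) : Measurable g := measurable_from_top

/-- measure of the event that all radii at sites `i ∈ I` are `< c i`. -/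
lemma fw_meas_inter_lt (ν : Measure (ℕ → ℕ → ℝ)) [IsProbabilityMeasure ν] (PR : Measure ℝ)
    (hRlaw : ∀ p : ℕ × ℕ, ν.map (fun r => r p.1 p.2) = PR)
    (hRindep : iIndepFun
      (fun (p : ℕ × ℕ) (r : ℕ → ℕ → ℝ) => r p.1 p.2) ν)
    (I : Finset ℕ) (s : ℕ → ℕ) (c : ℕ → ℝ) :
    ν {r | ∀ i ∈ I, ∀ j < s i, r i j < c i}
      = ∏ i ∈ I, PR (Set.Iio (c i)) ^ (s i) := by
  classical
  set T : Finset (ℕ × ℕ) := I.biUnion (fun i => {i} ×ˢ Finset.range (s i)) with hT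
  have hmemT : ∀ p : ℕ × ℕ, p ∈ T ↔ p.1 ∈ I ∧ p.2 < s p.1 := by
    intro p
    simp only [hT, Finset.mem_biUnion, Finset.mem_product, Finset.mem_singleton,
      Finset.mem_range]
    constructor
    · rintro ⟨i, hi, h1, h2⟩
      exact ⟨h1 ▸ hi, h1 ▸ h2⟩
    · rintro ⟨h1, h2⟩
      exact ⟨p.1, h1, rfl, h2⟩
  have hset : {r : ℕ → ℕ → ℝ | ∀ i ∈ I, ∀ j < s i, r i j < c i}
      = ⋂ p ∈ T, (fun r : ℕ → ℕ → ℝ => r p.1 p.2) ⁻¹' (Set.Iio (c p.1)) := by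
    ext r
    simp only [Set.mem_setOf_eq, Set.mem_iInter, Set.mem_preimage, Set.mem_Iio]
    constructor
    · intro h p hp
      obtain ⟨h1, h2⟩ := (hmemT p).1 hp
      exact h p.1 h1 p.2 h2
    · intro h i hi j hj
      exact h (i, j) ((hmemT (i, j)).2 ⟨hi, hj⟩)
  rw [hset, hRindep.meas_biInter (fun p _ => ⟨Set.Iio (c p.1), measurableSet_Iio, rfl⟩)]
  have hval : ∀ p : ℕ × ℕ,
      ν ((fun r : ℕ → ℕ → ℝ => r p.1 p.2) ⁻¹' (Set.Iio (c p.1))) = PR (Set.Iio (c p.1)) := by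
    intro p
    rw [← hRlaw p, Measure.map_apply (fw_eval_meas p) measurableSet_Iio]
  calc (∏ p ∈ T, ν ((fun r : ℕ → ℕ → ℝ => r p.1 p.2) ⁻¹' (Set.Iio (c p.1))))
      = ∏ p ∈ T, PR (Set.Iio (c p.1)) := Finset.prod_congr rfl (fun p _ => hval p)
    _ = ∏ i ∈ I, ∏ p ∈ ({i} ×ˢ Finset.range (s i)), PR (Set.Iio (c p.1)) := by
        rw [hT]
        apply Finset.prod_biUnion
        intro x hx y hy hxy
        simp only [Finset.disjoint_left, Finset.mem_product, Finset.mem_singleton,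
          Finset.mem_range]
        rintro ⟨a, b⟩ ⟨rfl, -⟩ ⟨h, -⟩
        exact hxy h
    _ = ∏ i ∈ I, PR (Set.Iio (c i)) ^ (s i) := by
        apply Finset.prod_congr rfl
        intro i _
        rw [Finset.prod_product]
        simp

lemma fw_lintegral_prod (μ : Measure (ℕ → ℕ)) [IsProbabilityMeasure μ]
    (hNindep : iIndepFun (fun (i : ℕ) (f : ℕ → ℕ) => f i) μ)
    (I : Finset ℕ) (g : ℕ → ℕ → ℝ≥0∞) :
    ∫⁻ s, ∏ i ∈ I, g i (s i) ∂μ = ∏ i ∈ I, ∫⁻ s, g i (s i) ∂μ := by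
  classical
  have hgm : ∀ i : ℕ, Measurable (fun s : ℕ → ℕ => g i (s i)) :=
    fun i => (fw_meas_g (g i)).comp (measurable_pi_apply i)
  have hind : iIndepFun (fun (i : ℕ) (s : ℕ → ℕ) => g i (s i)) μ :=
    hNindep.comp g (fun i => fw_meas_g (g i))
  induction I using Finset.induction with
  | empty => simp
  | @insert a I ha ih =>
    have hprod : (∏ j ∈ I, fun s : ℕ → ℕ => g j (s j)) = fun s => ∏ j ∈ I, g j (s j) := by
      funext s
      simp [Finset.prod_apply]
    have hIndep2 : IndepFun (fun s : ℕ → ℕ => g a (s a))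
        (fun s => ∏ j ∈ I, g j (s j)) μ := by
      have := (hind.indepFun_finsetProd_of_notMem (fun i => hgm i) ha).symm
      rwa [hprod] at this
    calc ∫⁻ s, ∏ i ∈ insert a I, g i (s i) ∂μ
        = ∫⁻ s, g a (s a) * ∏ i ∈ I, g i (s i) ∂μ := by
          congr 1; funext s; rw [Finset.prod_insert ha]
      _ = (∫⁻ s, g a (s a) ∂μ) * ∫⁻ s, ∏ i ∈ I, g i (s i) ∂μ :=
          lintegral_mul_eq_lintegral_mul_lintegral_of_indepFun (hgm a)
            (Finset.measurable_prod I (fun i _ => hgm i)) hIndep2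
      _ = ∏ i ∈ insert a I, ∫⁻ s, g i (s i) ∂μ := by
          rw [ih, Finset.prod_insert ha]

/-! ### Measurability of the survival event -/

lemma fw_le_eff_set_meas (i : ℕ) (t : ℝ) (ht : 0 < t) :
    MeasurableSet {p : (ℕ → ℕ) × (ℕ → ℕ → ℝ) | t ≤ effRadius p.1 p.2 i} := by
  have hset : {p : (ℕ → ℕ) × (ℕ → ℕ → ℝ) | t ≤ effRadius p.1 p.2 i}
      = ⋃ j : ℕ, ({p : (ℕ → ℕ) × (ℕ → ℕ → ℝ) | j < p.1 i} ∩ {p | t ≤ p.2 i j}) := by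
    ext p
    simp only [Set.mem_setOf_eq, Set.mem_iUnion, Set.mem_inter_iff]
    rw [fw_le_effRadius_iff ht]
  rw [hset]
  refine MeasurableSet.iUnion (fun j => MeasurableSet.inter ?_ ?_)
  · have h2 : {p : (ℕ → ℕ) × (ℕ → ℕ → ℝ) | j < p.1 i}
        = ⋃ k : ℕ, ⋃ (_ : j < k), ((fun p : (ℕ → ℕ) × (ℕ → ℕ → ℝ) => p.1 i) ⁻¹' {k}) := by
      ext p
      simp only [Set.mem_setOf_eq, Set.mem_iUnion, Set.mem_preimage, Set.mem_singleton_iff]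
      constructor
      · intro h; exact ⟨p.1 i, h, rfl⟩
      · rintro ⟨k, hk, rfl⟩; exact hk
    rw [h2]
    exact MeasurableSet.iUnion fun k => MeasurableSet.iUnion fun hk =>
      ((measurable_pi_apply i).comp measurable_fst) (measurableSet_singleton k)
  · exact ((measurable_pi_apply j).comp ((measurable_pi_apply i).comp measurable_snd))
      measurableSet_Ici

lemma fw_activeSet_meas :
    ∀ m : ℕ, MeasurableSet {p : (ℕ → ℕ) × (ℕ → ℕ → ℝ) | FireworkActive p.1 p.2 m} := by
  intro m
  induction m using Nat.strong_induction_on with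
  | _ m ih =>
    match m with
    | 0 =>
      have hset : {p : (ℕ → ℕ) × (ℕ → ℕ → ℝ) | FireworkActive p.1 p.2 0}
          = (fun p : (ℕ → ℕ) × (ℕ → ℕ → ℝ) => p.1 0) ⁻¹' {k | 1 ≤ k} := by
        ext p
        constructor
        · intro h
          cases h with
          | zero h => exact h
        · intro h; exact .zero h
      rw [hset]
      exact ((measurable_pi_apply 0).comp measurable_fst) MeasurableSpace.measurableSet_top
    | Nat.succ m =>
      have hset : {p : (ℕ → ℕ) × (ℕ → ℕ → ℝ) | FireworkActive p.1 p.2 (m + 1)}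
          = ⋃ i : ℕ, ⋃ (_ : i ≤ m),
            ({p : (ℕ → ℕ) × (ℕ → ℕ → ℝ) | FireworkActive p.1 p.2 i}
              ∩ {p | (m : ℝ) + 1 - (i : ℝ) ≤ effRadius p.1 p.2 i}) := by
        ext p
        simp only [Set.mem_setOf_eq, Set.mem_iUnion, Set.mem_inter_iff]
        constructor
        · intro h
          cases h with
          | succ i m him hact heff => exact ⟨i, him, hact, heff⟩
        · rintro ⟨i, him, hact, heff⟩
          exact .succ i m him hact heff
      rw [hset]
      refine MeasurableSet.iUnion fun i => MeasurableSet.iUnion fun hi =>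
        MeasurableSet.inter (ih i (by omega)) (fw_le_eff_set_meas i _ ?_)
      have : (i : ℝ) ≤ (m : ℝ) := by exact_mod_cast hi
      linarith

lemma fw_infinite_iff (s : Set ℕ) : s.Infinite ↔ ∀ N : ℕ, ∃ m, N ≤ m ∧ m ∈ s := by
  constructor
  · intro h N
    by_contra hc
    push_neg at hc
    apply h
    apply Set.Finite.subset (Set.finite_Iio N)
    intro m hm
    rw [Set.mem_Iio]
    by_contra hmN
    exact hc m (by omega) hm
  · intro h
    by_contra hfin
    rw [Set.not_infinite] at hfin
    obtain ⟨b, hb⟩ := hfin.bddAbove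
    obtain ⟨m, hm1, hm2⟩ := h (b + 1)
    have := hb hm2
    omega

lemma fw_survSet_meas :
    MeasurableSet {p : (ℕ → ℕ) × (ℕ → ℕ → ℝ) | fireworkSurvives p.1 p.2} := by
  have hset : {p : (ℕ → ℕ) × (ℕ → ℕ → ℝ) | fireworkSurvives p.1 p.2}
      = ⋂ N : ℕ, ⋃ m : ℕ, ⋃ (_ : N ≤ m),
          {p : (ℕ → ℕ) × (ℕ → ℕ → ℝ) | FireworkActive p.1 p.2 m} := by
    ext p
    simp only [Set.mem_setOf_eq, Set.mem_iInter, Set.mem_iUnion, fireworkSurvives,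
      fw_infinite_iff]
    constructor
    · intro h N
      obtain ⟨m, h1, h2⟩ := h N
      exact ⟨m, h1, h2⟩
    · intro h N
      obtain ⟨m, h1, h2⟩ := h N
      exact ⟨m, h1, h2⟩
  rw [hset]
  exact MeasurableSet.iInter fun N => MeasurableSet.iUnion fun m =>
    MeasurableSet.iUnion fun _ => fw_activeSet_meas m

/-! ### The basic quantities -/

/-- `F(k) = P(R < k)` as an extended nonnegative real. -/
def fwF (PR : Measure ℝ) (k : ℕ) : ℝ≥0∞ := PR (Set.Iio (k : ℝ))

/-- `q(k) = G_N(P(R < k))` as an extended nonnegative real. -/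
def fwQ (PN : Measure ℕ) (PR : Measure ℝ) (k : ℕ) : ℝ≥0∞ :=
  ∑' m : ℕ, fwF PR k ^ m * PN {m}

/-- quenched probability that no station in `[1, n]` reaches beyond `n`. -/
def fwA (PR : Measure ℝ) (s : ℕ → ℕ) (n : ℕ) : ℝ≥0∞ :=
  ∏ i ∈ Finset.Icc 1 n, fwF PR (n + 1 - i) ^ (s i)

lemma fw_nu_bad (ν : Measure (ℕ → ℕ → ℝ)) [IsProbabilityMeasure ν] (PR : Measure ℝ)
    (hRlaw : ∀ p : ℕ × ℕ, ν.map (fun r => r p.1 p.2) = PR)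
    (hRindep : iIndepFun
      (fun (p : ℕ × ℕ) (r : ℕ → ℕ → ℝ) => r p.1 p.2) ν)
    (s : ℕ → ℕ) (n : ℕ) :
    ν {r | ∀ i ∈ Finset.Icc 1 n, ∀ j < s i, r i j < ((n + 1 - i : ℕ) : ℝ)} = fwA PR s n := by
  simpa [fwA, fwF] using
    fw_meas_inter_lt ν PR hRlaw hRindep (Finset.Icc 1 n) s (fun i => ((n + 1 - i : ℕ) : ℝ))

lemma fw_nu_head (ν : Measure (ℕ → ℕ → ℝ)) [IsProbabilityMeasure ν] (PR : Measure ℝ)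
    (hRlaw : ∀ p : ℕ × ℕ, ν.map (fun r => r p.1 p.2) = PR)
    (hRindep : iIndepFun
      (fun (p : ℕ × ℕ) (r : ℕ → ℕ → ℝ) => r p.1 p.2) ν)
    (s : ℕ → ℕ) (M : ℕ) :
    ν {r | ∀ j < s 0, r 0 j < ((M : ℕ) : ℝ)} = fwF PR M ^ (s 0) := by
  have h := fw_meas_inter_lt ν PR hRlaw hRindep {0} s (fun _ => ((M : ℕ) : ℝ))
  have hset : {r : ℕ → ℕ → ℝ | ∀ i ∈ ({0} : Finset ℕ), ∀ j < s i, r i j < ((M : ℕ) : ℝ)}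
      = {r : ℕ → ℕ → ℝ | ∀ j < s 0, r 0 j < ((M : ℕ) : ℝ)} := by
    ext r
    simp
  rw [hset] at h
  rw [h]
  simp [fwF]

lemma fw_lint_A (PN : Measure ℕ) (μ : Measure (ℕ → ℕ)) [IsProbabilityMeasure μ] (PR : Measure ℝ)
    (hNlaw : ∀ i : ℕ, μ.map (fun f => f i) = PN)
    (hNindep : iIndepFun (fun (i : ℕ) (f : ℕ → ℕ) => f i) μ) (n : ℕ) :
    ∫⁻ s, fwA PR s n ∂μ = ∏ k ∈ Finset.Icc 1 n, fwQ PN PR k := by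
  have h1 : ∀ (i : ℕ) (x : ℝ≥0∞), ∫⁻ s : ℕ → ℕ, x ^ (s i) ∂μ = ∑' m : ℕ, x ^ m * PN {m} := by
    intro i x
    calc ∫⁻ s : ℕ → ℕ, x ^ (s i) ∂μ
        = ∫⁻ m, x ^ m ∂(μ.map (fun s : ℕ → ℕ => s i)) :=
          (lintegral_map (fw_meas_g (fun m : ℕ => x ^ m)) (measurable_pi_apply i)).symm
      _ = ∫⁻ m, x ^ m ∂PN := by rw [hNlaw i]
      _ = ∑' m : ℕ, x ^ m * PN {m} := lintegral_countable' _
  calc ∫⁻ s, fwA PR s n ∂μ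
      = ∏ i ∈ Finset.Icc 1 n, ∫⁻ s : ℕ → ℕ, fwF PR (n + 1 - i) ^ (s i) ∂μ :=
        fw_lintegral_prod μ hNindep (Finset.Icc 1 n) (fun i m => fwF PR (n + 1 - i) ^ m)
    _ = ∏ i ∈ Finset.Icc 1 n, fwQ PN PR (n + 1 - i) :=
        Finset.prod_congr rfl (fun i _ => h1 i _)
    _ = ∏ k ∈ Finset.Icc 1 n, fwQ PN PR k := by
        refine Finset.prod_nbij' (fun i => n + 1 - i) (fun k => n + 1 - k) ?_ ?_ ?_ ?_ ?_
        · intro a ha; simp only [Finset.mem_Icc] at ha ⊢; omega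
        · intro a ha; simp only [Finset.mem_Icc] at ha ⊢; omega
        · intro a ha; simp only [Finset.mem_Icc] at ha; omega
        · intro a ha; simp only [Finset.mem_Icc] at ha; omega
        · intro a ha; rfl

/-! ### The quenched survival bound -/

lemma fw_quenched (PR : Measure ℝ) [IsProbabilityMeasure PR]
    (ν : Measure (ℕ → ℕ → ℝ)) [IsProbabilityMeasure ν]
    (hRlaw : ∀ p : ℕ × ℕ, ν.map (fun r => r p.1 p.2) = PR)
    (hRindep : iIndepFun
      (fun (p : ℕ × ℕ) (r : ℕ → ℕ → ℝ) => r p.1 p.2) ν)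
    (hFlt : ∀ k : ℕ, fwF PR k < 1)
    (s : ℕ → ℕ) (hs0 : 1 ≤ s 0)
    (hfin : (∑' n : ℕ, fwA PR s n) ≠ ⊤) :
    0 < ν {r | fireworkSurvives s r} := by
  classical
  obtain ⟨M0, hM0⟩ := Filter.eventually_atTop.1
    ((ENNReal.tendsto_sum_nat_add (fun n => fwA PR s n) hfin).eventually_lt_const zero_lt_one)
  have htail : (∑' k : ℕ, fwA PR s (k + (M0 + 1))) < 1 := hM0 (M0 + 1) (by omega)
  set B : ℕ → Set (ℕ → ℕ → ℝ) :=
    fun n => {r | ∀ i ∈ Finset.Icc 1 n, ∀ j < s i, r i j < ((n + 1 - i : ℕ) : ℝ)} with hBdef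
  set E : Set (ℕ → ℕ → ℝ) := {r | ∀ j < s 0, r 0 j < ((M0 + 2 : ℕ) : ℝ)} with hEdef
  set G : Set (ℕ → ℕ → ℝ) := ⋂ k : ℕ, (B (k + (M0 + 1)))ᶜ with hGdef
  have hBmeas : ∀ n, ν (B n) = fwA PR s n := fun n => fw_nu_bad ν PR hRlaw hRindep s n
  have hEmeas : ν E = fwF PR (M0 + 2) ^ (s 0) := fw_nu_head ν PR hRlaw hRindep s (M0 + 2)
  have hBms : ∀ n, MeasurableSet (B n) := by
    intro n
    have hBeq : B n = ⋂ i ∈ (Finset.Icc 1 n : Finset ℕ), ⋂ j ∈ Set.Iio (s i),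
        (fun r : ℕ → ℕ → ℝ => r i j) ⁻¹' Set.Iio ((n + 1 - i : ℕ) : ℝ) := by
      ext r
      simp [hBdef, Set.mem_iInter]
    rw [hBeq]
    exact MeasurableSet.biInter (Finset.Icc 1 n).countable_toSet (fun i _ =>
      MeasurableSet.biInter (Set.to_countable _) (fun j _ =>
        fw_eval_meas (i, j) measurableSet_Iio))
  have hEms : MeasurableSet E := by
    have hEeq : E = ⋂ j ∈ Set.Iio (s 0),
        (fun r : ℕ → ℕ → ℝ => r 0 j) ⁻¹' Set.Iio ((M0 + 2 : ℕ) : ℝ) := by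
      ext r
      simp [hEdef, Set.mem_iInter]
    rw [hEeq]
    exact MeasurableSet.biInter (Set.to_countable _) (fun j _ =>
      fw_eval_meas (0, j) measurableSet_Iio)
  have hGms : MeasurableSet G := MeasurableSet.iInter fun k => (hBms _).compl
  -- independence of E and G
  have hle : ∀ p : ℕ × ℕ,
      MeasurableSpace.comap (fun r : ℕ → ℕ → ℝ => r p.1 p.2) inferInstance ≤
        (inferInstance : MeasurableSpace (ℕ → ℕ → ℝ)) :=
    fun p => (fw_eval_meas p).comap_le
  have hind := ProbabilityTheory.indep_biSup_compl hle hRindep.iIndep {p : ℕ × ℕ | p.1 = 0}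
  rw [ProbabilityTheory.Indep_iff] at hind
  have hE1 : MeasurableSet[⨆ p ∈ {p : ℕ × ℕ | p.1 = 0},
      MeasurableSpace.comap (fun r : ℕ → ℕ → ℝ => r p.1 p.2) inferInstance] E := by
    have hEeq : E = ⋂ j ∈ Set.Iio (s 0),
        (fun r : ℕ → ℕ → ℝ => r 0 j) ⁻¹' Set.Iio ((M0 + 2 : ℕ) : ℝ) := by
      ext r
      simp [hEdef, Set.mem_iInter]
    rw [hEeq]
    refine MeasurableSet.biInter (Set.to_countable _) (fun j _ => ?_)
    have h1 : MeasurableSet[MeasurableSpace.comap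
        (fun r : ℕ → ℕ → ℝ => r (0, j).1 (0, j).2) inferInstance]
        ((fun r : ℕ → ℕ → ℝ => r 0 j) ⁻¹' Set.Iio ((M0 + 2 : ℕ) : ℝ)) :=
      ⟨Set.Iio ((M0 + 2 : ℕ) : ℝ), measurableSet_Iio, rfl⟩
    exact le_iSup₂ (f := fun (p : ℕ × ℕ) (_ : p ∈ {p : ℕ × ℕ | p.1 = 0}) =>
      MeasurableSpace.comap (fun r : ℕ → ℕ → ℝ => r p.1 p.2) inferInstance)
      ((0 : ℕ), j) rfl _ h1
  have hG1 : MeasurableSet[⨆ p ∈ {p : ℕ × ℕ | p.1 = 0}ᶜ,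
      MeasurableSpace.comap (fun r : ℕ → ℕ → ℝ => r p.1 p.2) inferInstance] G := by
    refine MeasurableSet.iInter (fun k => MeasurableSet.compl ?_)
    have hBeq : B (k + (M0 + 1)) = ⋂ i ∈ {i : ℕ | i ∈ Finset.Icc 1 (k + (M0 + 1))},
        ⋂ j ∈ Set.Iio (s i),
        (fun r : ℕ → ℕ → ℝ => r i j) ⁻¹' Set.Iio (((k + (M0 + 1)) + 1 - i : ℕ) : ℝ) := by
      ext r
      simp [hBdef, Set.mem_iInter]
    rw [hBeq]
    refine MeasurableSet.biInter (Set.to_countable _) (fun i hi => ?_)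
    refine MeasurableSet.biInter (Set.to_countable _) (fun j _ => ?_)
    have h1 : MeasurableSet[MeasurableSpace.comap
        (fun r : ℕ → ℕ → ℝ => r (i, j).1 (i, j).2) inferInstance]
        ((fun r : ℕ → ℕ → ℝ => r i j) ⁻¹' Set.Iio (((k + (M0 + 1)) + 1 - i : ℕ) : ℝ)) :=
      ⟨Set.Iio (((k + (M0 + 1)) + 1 - i : ℕ) : ℝ), measurableSet_Iio, rfl⟩
    have hi0 : (i, j) ∈ {p : ℕ × ℕ | p.1 = 0}ᶜ := by
      simp only [Set.mem_setOf_eq, Finset.mem_Icc] at hi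
      simp only [Set.mem_compl_iff, Set.mem_setOf_eq]
      omega
    exact le_iSup₂ (f := fun (p : ℕ × ℕ) (_ : p ∈ {p : ℕ × ℕ | p.1 = 0}ᶜ) =>
      MeasurableSpace.comap (fun r : ℕ → ℕ → ℝ => r p.1 p.2) inferInstance)
      (i, j) hi0 _ h1
  have hprod := hind Eᶜ G (MeasurableSet.compl hE1) hG1
  -- positivity of the two factors
  have hEc : ν Eᶜ ≠ 0 := by
    rw [prob_compl_eq_one_sub hEms, hEmeas]
    have hlt1 : fwF PR (M0 + 2) ^ s 0 < 1 :=
      pow_lt_one₀ zero_le (hFlt (M0 + 2)) (by omega)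
    exact (tsub_pos_of_lt hlt1).ne'
  have hGc : ν G ≠ 0 := by
    have hGcompl : ν Gᶜ < 1 := by
      have hGU : Gᶜ = ⋃ k : ℕ, B (k + (M0 + 1)) := by
        rw [hGdef, Set.compl_iInter]
        simp
      rw [hGU]
      refine lt_of_le_of_lt (measure_iUnion_le _) ?_
      simpa only [hBmeas] using htail
    have h2 : ν G = 1 - ν Gᶜ := by
      conv_lhs => rw [← compl_compl G]
      rw [prob_compl_eq_one_sub hGms.compl]
    rw [h2]
    exact (tsub_pos_of_lt hGcompl).ne'
  have hmulpos : 0 < ν (Eᶜ ∩ G) := by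
    rw [hprod]
    exact ENNReal.mul_pos hEc hGc
  refine lt_of_lt_of_le hmulpos (measure_mono ?_)
  rintro r ⟨hrE, hrG⟩
  refine fw_survives_of_good (M0 + 1) ?_ ?_
  · rw [fw_le_effRadius_iff (by positivity)]
    have hrE' : ¬ ∀ j < s 0, r 0 j < ((M0 + 2 : ℕ) : ℝ) := hrE
    push_neg at hrE'
    obtain ⟨j, hj, hjr⟩ := hrE'
    refine ⟨j, hj, ?_⟩
    push_cast at hjr ⊢
    linarith
  · intro n hn
    have hk : r ∉ B n := by
      have h3 := Set.mem_iInter.1 hrG (n - (M0 + 1))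
      have h4 : n - (M0 + 1) + (M0 + 1) = n := by omega
      rwa [h4] at h3
    have hk' : ¬ ∀ i ∈ Finset.Icc 1 n, ∀ j < s i, r i j < ((n + 1 - i : ℕ) : ℝ) := hk
    push_neg at hk'
    obtain ⟨i, hi, j, hj, hjr⟩ := hk'
    rw [Finset.mem_Icc] at hi
    have hcast : ((n + 1 - i : ℕ) : ℝ) = (n : ℝ) + 1 - (i : ℝ) := by
      rw [Nat.cast_sub (by omega)]
      push_cast
      ring
    refine ⟨i, hi.1, hi.2, ?_⟩
    have hipos : 0 < (n : ℝ) + 1 - (i : ℝ) := by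
      have : (i : ℝ) ≤ (n : ℝ) := by exact_mod_cast hi.2
      linarith
    rw [fw_le_effRadius_iff hipos]
    exact ⟨j, hj, by rw [← hcast]; linarith⟩

/-- **Proposition 3(1)** -/
theorem firework_survival_of_liminf
    (PN : Measure ℕ) (PR : Measure ℝ)
    [IsProbabilityMeasure PN] [IsProbabilityMeasure PR]
    (μ : Measure (ℕ → ℕ)) (ν : Measure (ℕ → ℕ → ℝ))
    [IsProbabilityMeasure μ] [IsProbabilityMeasure ν]
    -- the station numbers are i.i.d. with law `PN`
    (hNlaw : ∀ i : ℕ, μ.map (fun f => f i) = PN)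
    (hNindep : iIndepFun (fun (i : ℕ) (f : ℕ → ℕ) => f i) μ)
    -- the radii are i.i.d. with law `PR`
    (hRlaw : ∀ p : ℕ × ℕ, ν.map (fun r => r p.1 p.2) = PR)
    (hRindep : iIndepFun
      (fun (p : ℕ × ℕ) (r : ℕ → ℕ → ℝ) => r p.1 p.2) ν)
    -- the radii take values in `[0, ∞)` and `P(R < 1) ∈ (0,1)`
    (hRnonneg : PR (Set.Iio (0 : ℝ)) = 0)
    (hR1 : 0 < PR (Set.Iio (1 : ℝ)) ∧ PR (Set.Iio (1 : ℝ)) < 1)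
    -- `liminf_n n (1 - G_N(P(R < n))) > 1` (the nonnegative sequence is viewed in `ℝ≥0∞`)
    (hliminf : 1 < Filter.liminf (fun n : ℕ =>
      ENNReal.ofReal ((n : ℝ) * (1 - pgf PN ((PR (Set.Iio (n : ℝ))).toReal)))) Filter.atTop) :
    0 < (μ.prod ν) {p : (ℕ → ℕ) × (ℕ → ℕ → ℝ) | fireworkSurvives p.1 p.2} ∧
    μ {stn | 0 < ν {r | fireworkSurvives stn r}} = PN {k : ℕ | 0 < k} := by
  classical
  have hF1 : ∀ k : ℕ, fwF PR k ≤ 1 := fun k => prob_le_one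
  have hFne : ∀ k : ℕ, fwF PR k ≠ ⊤ := fun k => measure_ne_top _ _
  have hPNne : ∀ m : ℕ, PN {m} ≠ ⊤ := fun m => measure_ne_top _ _
  have hPNsum : ∑' m : ℕ, PN {m} = 1 := by
    have h1 : (⋃ m : ℕ, ({m} : Set ℕ)) = Set.univ := by ext x; simp
    rw [← measure_univ (μ := PN), ← h1,
      measure_iUnion (fun a b hab => Set.disjoint_singleton.2 hab)
        (fun m => measurableSet_singleton m)]
  have hPNtoReal : ∑' m : ℕ, (PN {m}).toReal = 1 := by
    rw [← ENNReal.tsum_toReal_eq hPNne, hPNsum, ENNReal.toReal_one]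
  have hqE_le : ∀ k, fwQ PN PR k ≤ 1 := by
    intro k
    calc fwQ PN PR k ≤ ∑' m : ℕ, PN {m} := by
          refine ENNReal.tsum_le_tsum (fun m => ?_)
          calc fwF PR k ^ m * PN {m} ≤ 1 * PN {m} :=
                mul_le_mul_left (pow_le_one' (hF1 k) m) _
            _ = PN {m} := one_mul _
      _ = 1 := hPNsum
  have hqE_ne : ∀ k, fwQ PN PR k ≠ ⊤ :=
    fun k => ne_top_of_le_ne_top ENNReal.one_ne_top (hqE_le k)
  have hqE_toReal : ∀ k, (fwQ PN PR k).toReal = pgf PN ((fwF PR k).toReal) := by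
    intro k
    rw [fwQ, ENNReal.tsum_toReal_eq
      (fun m => ENNReal.mul_ne_top (ENNReal.pow_ne_top (hFne k)) (hPNne m))]
    unfold pgf
    refine tsum_congr (fun m => ?_)
    rw [ENNReal.toReal_mul, ENNReal.toReal_pow, mul_comm]
  have hqE_ofReal : ∀ k, fwQ PN PR k = ENNReal.ofReal (pgf PN ((fwF PR k).toReal)) := by
    intro k
    rw [← hqE_toReal k, ENNReal.ofReal_toReal (hqE_ne k)]
  -- liminf consequences
  obtain ⟨c', hc'1, hc'2⟩ := exists_between hliminf
  have hc'top : c' ≠ ⊤ := hc'2.ne_top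
  obtain ⟨K0, hK0⟩ := Filter.eventually_atTop.1 (Filter.eventually_lt_of_lt_liminf hc'2)
  have hc1 : 1 < c'.toReal := by
    rw [← ENNReal.toReal_one]
    exact ENNReal.toReal_strict_mono hc'top hc'1
  have hKbig : ∀ n : ℕ, K0 ≤ n →
      c'.toReal < (n : ℝ) * (1 - pgf PN ((fwF PR n).toReal)) :=
    fun n hn => (ENNReal.lt_ofReal_iff_toReal_lt hc'top).1 (hK0 n hn)
  -- `P(R < k) < 1` for all `k`
  have hFlt : ∀ k : ℕ, fwF PR k < 1 := by
    intro k
    by_contra hge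
    have hk1 : fwF PR k = 1 := le_antisymm (hF1 k) (not_lt.1 hge)
    have h2 : fwF PR (max k K0) = 1 := by
      refine le_antisymm (hF1 _) ?_
      rw [← hk1]
      exact measure_mono (Set.Iio_subset_Iio (by exact_mod_cast le_max_left k K0))
    have h3 : pgf PN ((fwF PR (max k K0)).toReal) = 1 := by
      rw [h2, ENNReal.toReal_one]
      unfold pgf
      simp only [one_pow, mul_one]
      exact hPNtoReal
    have h4 := hKbig (max k K0) (le_max_right k K0)
    rw [h3] at h4
    simp only [sub_self, mul_zero] at h4
    linarith
  -- `P(N > 0) > 0`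
  have hPNpos : 0 < PN {m : ℕ | 0 < m} := by
    rw [pos_iff_ne_zero]
    intro h0
    have hm0 : ∀ m : ℕ, 0 < m → PN {m} = 0 := by
      intro m hm
      refine measure_mono_null ?_ h0
      intro x hx
      rw [Set.mem_singleton_iff] at hx
      simpa [hx] using hm
    have hPN0 : (PN {0}).toReal = 1 := by
      have hs := tsum_eq_single (L := SummationFilter.unconditional ℕ) (f := fun m : ℕ => (PN {m}).toReal) 0
        (fun m hm => by simp [hm0 m (Nat.pos_of_ne_zero hm)])
      rw [← hPNtoReal, hs]
    have hpgf1 : ∀ t : ℝ, pgf PN t = 1 := by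
      intro t
      unfold pgf
      rw [tsum_eq_single (L := SummationFilter.unconditional ℕ) (f := fun m : ℕ => (PN {m}).toReal * t ^ m) 0
        (fun m hm => by simp [hm0 m (Nat.pos_of_ne_zero hm)])]
      simp [hPN0]
    have h4 := hKbig K0 le_rfl
    rw [hpgf1] at h4
    simp only [sub_self, mul_zero] at h4
    linarith
  -- bound on `q(k)` for large `k`
  set K : ℕ := K0 + ⌈c'.toReal⌉₊ + 2 with hKdef
  have hqk : ∀ k : ℕ, K ≤ k → fwQ PN PR k ≤ ENNReal.ofReal (1 - c'.toReal / k) := by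
    intro k hk
    have h4 := hKbig k (by omega)
    have hk0 : (0 : ℝ) < k := by
      have : 0 < k := by omega
      exact_mod_cast this
    have h5 : pgf PN ((fwF PR k).toReal) ≤ 1 - c'.toReal / k := by
      have h6 : c'.toReal / k < 1 - pgf PN ((fwF PR k).toReal) := by
        rw [div_lt_iff₀ hk0]
        linarith [h4]
      linarith
    rw [hqE_ofReal k]
    exact ENNReal.ofReal_le_ofReal h5
  have hsum_ne_top : (∑' n : ℕ, ∏ k ∈ Finset.Icc 1 n, fwQ PN PR k) ≠ ⊤ :=
    fw_tsum_prod_ne_top _ hqE_le _ hc1 K (by omega) hqk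
  -- a.e. finiteness of the quenched sums
  have hAmeas : ∀ n, Measurable (fun s => fwA PR s n) := by
    intro n
    refine Finset.measurable_prod _ (fun i _ => ?_)
    exact (fw_meas_g (fun m : ℕ => fwF PR (n + 1 - i) ^ m)).comp (measurable_pi_apply i)
  have hlt_top : ∫⁻ s, (∑' n : ℕ, fwA PR s n) ∂μ ≠ ⊤ := by
    rw [lintegral_tsum (fun n => (hAmeas n).aemeasurable)]
    rw [tsum_congr (fun n => fw_lint_A PN μ PR hNlaw hNindep n)]
    exact hsum_ne_top
  have hae : ∀ᵐ s ∂μ, (∑' n : ℕ, fwA PR s n) < ⊤ :=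
    ae_lt_top (Measurable.ennreal_tsum hAmeas) hlt_top
  have hGoodc : μ {s : ℕ → ℕ | ¬ (∑' n : ℕ, fwA PR s n) < ⊤} = 0 := ae_iff.1 hae
  set S1 : Set (ℕ → ℕ) := (fun s : ℕ → ℕ => s 0) ⁻¹' {m : ℕ | 0 < m} with hS1def
  have hS1meas : μ S1 = PN {m : ℕ | 0 < m} := by
    rw [← hNlaw 0, Measure.map_apply (measurable_pi_apply 0)
      MeasurableSpace.measurableSet_top]
  set Good : Set (ℕ → ℕ) := {s : ℕ → ℕ | (∑' n : ℕ, fwA PR s n) < ⊤} with hGooddef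
  have hGoodc' : μ Goodᶜ = 0 := hGoodc
  have hq : ∀ s ∈ S1 ∩ Good, 0 < ν {r | fireworkSurvives s r} := by
    rintro s ⟨hs1, hsg⟩
    exact fw_quenched PR ν hRlaw hRindep hFlt s hs1 hsg.ne
  have hup : {s : ℕ → ℕ | 0 < ν {r | fireworkSurvives s r}} ⊆ S1 := by
    intro s hs
    have hne : {r : ℕ → ℕ → ℝ | fireworkSurvives s r}.Nonempty := by
      rcases Set.eq_empty_or_nonempty {r : ℕ → ℕ → ℝ | fireworkSurvives s r} with h | h
      · exfalso
        rw [Set.mem_setOf_eq, h] at hs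
        simp at hs
      · exact h
    obtain ⟨r, hr⟩ := hne
    obtain ⟨m, hm⟩ := hr.nonempty
    exact fw_active_one_le hm
  have hdown : μ S1 ≤ μ {s : ℕ → ℕ | 0 < ν {r | fireworkSurvives s r}} := by
    calc μ S1 ≤ μ ((S1 ∩ Good) ∪ Goodᶜ) := by
          refine measure_mono (fun s hs => ?_)
          by_cases h : s ∈ Good
          · exact Or.inl ⟨hs, h⟩
          · exact Or.inr h
      _ ≤ μ (S1 ∩ Good) + μ Goodᶜ := measure_union_le _ _
      _ = μ (S1 ∩ Good) := by rw [hGoodc', add_zero]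
      _ ≤ μ {s : ℕ → ℕ | 0 < ν {r | fireworkSurvives s r}} :=
          measure_mono (fun s hs => hq s hs)
  have hsq : μ {stn | 0 < ν {r | fireworkSurvives stn r}} = PN {k : ℕ | 0 < k} := by
    refine le_antisymm ?_ ?_
    · rw [← hS1meas]
      exact measure_mono hup
    · rw [← hS1meas]
      exact hdown
  refine ⟨?_, hsq⟩
  rw [Measure.prod_apply fw_survSet_meas, pos_iff_ne_zero]
  intro h0
  rw [lintegral_eq_zero_iff (measurable_measure_prodMk_left fw_survSet_meas)] at h0
  have h2 : μ {s : ℕ → ℕ | ¬ ν (Prod.mk s ⁻¹'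
      {p : (ℕ → ℕ) × (ℕ → ℕ → ℝ) | fireworkSurvives p.1 p.2}) = 0} = 0 := ae_iff.1 h0
  have h3 : μ (S1 ∩ Good) = 0 := by
    refine measure_mono_null (fun s hs => ?_) h2
    exact (hq s hs).ne'
  have h4 : μ S1 = 0 := by
    have h5 : μ S1 ≤ μ (S1 ∩ Good) + μ Goodᶜ := by
      refine le_trans (measure_mono (fun s hs => ?_)) (measure_union_le _ _)
      by_cases h : s ∈ Good
      · exact Or.inl ⟨hs, h⟩
      · exact Or.inr h
    rw [h3, hGoodc', add_zero] at h5
    exact le_antisymm h5 zero_le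
  rw [hS1meas] at h4
  exact hPNpos.ne' h4

end
end

section
/- Let N be an ℕ-valued random variable, R a [0,∞)-valued random variable, and let W := ∫_0^∞ (1 − G_N(P(R < t))) dt, where in the integrals below the integrand is taken to be 0 at points where P(R ≥ t) = 0. Then: (1) if there exists M > 0 with P(N ≥ n) ≤ M/n for all n ≥ 1 and ∫_0^∞ P(R ≥ t)·ln(1/P(R ≥ t)) dt < +∞, then W < +∞; (2) if there exists ε > 0 with P(N ≥ n) ≥ ε/n for all n ≥ 1 and ∫_0^∞ P(R ≥ t)·ln(1/P(R ≥ t)) dt = +∞, then W = +∞. -/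
open MeasureTheory Filter Set
open scoped ENNReal NNReal Topology

noncomputable section

section Aux
variable (PN : Measure ℕ) [IsProbabilityMeasure PN]

lemma tsum_ite_measure (μ : Measure ℕ) (m : ℕ) :
    ∑' k : ℕ, (if m ≤ k then μ {k} else 0) = μ (Set.Ici m) := by
  have h1 : ∀ k : ℕ, (if m ≤ k then μ {k} else 0) = μ ({k} ∩ Set.Ici m) := by
    intro k
    by_cases h : m ≤ k
    · rw [if_pos h, Set.inter_eq_self_of_subset_left (by simpa using h)]
    · rw [if_neg h]
      have : ({k} : Set ℕ) ∩ Set.Ici m = ∅ := by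
        ext x; simp only [Set.mem_inter_iff, Set.mem_singleton_iff, Set.mem_Ici,
          Set.mem_empty_iff_false, iff_false]
        rintro ⟨rfl, hx⟩; exact h hx
      rw [this, measure_empty]
  rw [tsum_congr h1, ← measure_iUnion]
  · congr 1
    ext x; simp
  · intro i j hij
    exact Set.disjoint_left.2 fun x hx hy => hij (by
      have h1 : x = i := hx.1
      have h2 : x = j := hy.1
      omega)
  · exact fun k => MeasurableSet.inter trivial trivial

variable (PN : Measure ℕ) [IsProbabilityMeasure PN]

lemma tsum_p : ∑' k : ℕ, (PN {k}).toReal = 1 := by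
  have h : ∑' k : ℕ, PN {k} = 1 := by
    have := tsum_ite_measure PN 0
    simp only [Nat.zero_le, if_true] at this
    rw [this]
    have : Set.Ici (0 : ℕ) = Set.univ := by ext x; simp
    rw [this, measure_univ]
  rw [← ENNReal.tsum_toReal_eq (fun k => measure_ne_top _ _), h]
  simp

lemma summable_p : Summable (fun k : ℕ => (PN {k}).toReal) :=
  ENNReal.summable_toReal (by
    have := tsum_ite_measure PN 0
    simp only [Nat.zero_le, if_true] at this
    rw [this]; exact measure_ne_top _ _)

lemma pgf_nonneg {s : ℝ} (h0 : 0 ≤ s) : 0 ≤ pgf PN s :=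
  tsum_nonneg fun k => mul_nonneg ENNReal.toReal_nonneg (pow_nonneg h0 k)

lemma summable_pgf {s : ℝ} (h0 : 0 ≤ s) (h1 : s ≤ 1) :
    Summable (fun k : ℕ => (PN {k}).toReal * s ^ k) :=
  (summable_p PN).of_nonneg_of_le
    (fun k => mul_nonneg ENNReal.toReal_nonneg (pow_nonneg h0 k))
    (fun k => mul_le_of_le_one_right ENNReal.toReal_nonneg (pow_le_one₀ h0 h1))

lemma pgf_le_one {s : ℝ} (h0 : 0 ≤ s) (h1 : s ≤ 1) : pgf PN s ≤ 1 := by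
  rw [pgf, ← tsum_p PN]
  exact Summable.tsum_le_tsum
    (fun k => mul_le_of_le_one_right ENNReal.toReal_nonneg (pow_le_one₀ h0 h1))
    (summable_pgf PN h0 h1) (summable_p PN)

lemma pgf_one : pgf PN 1 = 1 := by
  rw [pgf]; simpa using tsum_p PN

lemma tail_le_one (m : ℕ) : (PN (Set.Ici m)).toReal ≤ 1 := by
  calc (PN (Set.Ici m)).toReal ≤ (PN Set.univ).toReal :=
        ENNReal.toReal_mono (measure_ne_top _ _) (measure_mono (Set.subset_univ _))
    _ = 1 := by simp

lemma summable_tail {s : ℝ} (h0 : 0 ≤ s) (h1 : s < 1) :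
    Summable (fun n : ℕ => (PN (Set.Ici (n + 1))).toReal * s ^ n) :=
  (summable_geometric_of_lt_one h0 h1).of_nonneg_of_le
    (fun n => mul_nonneg ENNReal.toReal_nonneg (pow_nonneg h0 n))
    (fun n => mul_le_of_le_one_left (pow_nonneg h0 n) (tail_le_one PN _))

lemma one_sub_pgf {s : ℝ} (h0 : 0 ≤ s) (h1 : s < 1) :
    1 - pgf PN s = (1 - s) * ∑' n : ℕ, (PN (Set.Ici (n + 1))).toReal * s ^ n := by
  set p : ℕ → ℝ := fun k => (PN {k}).toReal with hp
  have hp0 : ∀ k, 0 ≤ p k := fun k => ENNReal.toReal_nonneg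
  have step1 : 1 - pgf PN s = ∑' k : ℕ, p k * (1 - s ^ k) := by
    calc 1 - pgf PN s = (∑' k : ℕ, p k) - ∑' k : ℕ, p k * s ^ k := by rw [pgf, tsum_p PN]
      _ = ∑' k : ℕ, (p k - p k * s ^ k) :=
          (Summable.tsum_sub (summable_p PN) (summable_pgf PN h0 h1.le)).symm
      _ = ∑' k : ℕ, p k * (1 - s ^ k) := tsum_congr fun k => by ring
  -- geometric sum rewriting
  set F : ℕ → ℝ := fun k => ∑ n ∈ Finset.range k, p k * s ^ n with hF
  have step2 : ∀ k, p k * (1 - s ^ k) = (1 - s) * F k := by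
    intro k
    have h2 : (1 - s) * ∑ i ∈ Finset.range k, s ^ i = 1 - s ^ k := by
      linear_combination -geom_sum_mul s k
    show p k * (1 - s ^ k) = (1 - s) * ∑ n ∈ Finset.range k, p k * s ^ n
    rw [← Finset.mul_sum]
    calc p k * (1 - s ^ k) = p k * ((1 - s) * ∑ i ∈ Finset.range k, s ^ i) := by rw [h2]
      _ = (1 - s) * (p k * ∑ i ∈ Finset.range k, s ^ i) := by ring
  have hFnn : ∀ k, 0 ≤ F k := fun k =>
    Finset.sum_nonneg fun n _ => mul_nonneg (hp0 k) (pow_nonneg h0 n)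
  have hFle : ∀ k, F k ≤ p k * (1 - s)⁻¹ := by
    intro k
    show (∑ n ∈ Finset.range k, p k * s ^ n) ≤ p k * (1 - s)⁻¹
    rw [← Finset.mul_sum]
    refine mul_le_mul_of_nonneg_left ?_ (hp0 k)
    calc ∑ i ∈ Finset.range k, s ^ i ≤ ∑' i : ℕ, s ^ i :=
          Summable.sum_le_tsum _ (fun i _ => pow_nonneg h0 i) (summable_geometric_of_lt_one h0 h1)
      _ = (1 - s)⁻¹ := tsum_geometric_of_lt_one h0 h1
  have hFsum : Summable F :=
    ((summable_p PN).mul_right (1 - s)⁻¹).of_nonneg_of_le hFnn hFle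
  have step3 : ∑' k, F k = ∑' n : ℕ, (PN (Set.Ici (n + 1))).toReal * s ^ n := by
    have e1 : ENNReal.ofReal (∑' k, F k) = ∑' k, ENNReal.ofReal (F k) :=
      ENNReal.ofReal_tsum_of_nonneg hFnn hFsum
    have e2 : ∀ k, ENNReal.ofReal (F k)
        = ∑' n : ℕ, (if n < k then PN {k} * ENNReal.ofReal (s ^ n) else 0) := by
      intro k
      show ENNReal.ofReal (∑ n ∈ Finset.range k, p k * s ^ n) = _
      rw [ENNReal.ofReal_sum_of_nonneg (fun n _ => mul_nonneg (hp0 k) (pow_nonneg h0 n))]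
      rw [tsum_eq_sum (s := Finset.range k)
        (fun b hb => if_neg (by simpa using hb))]
      refine Finset.sum_congr rfl fun n hn => ?_
      rw [if_pos (by simpa using hn), ENNReal.ofReal_mul (hp0 k),
        ENNReal.ofReal_toReal (measure_ne_top _ _)]
    have e4 : ∀ n : ℕ, (∑' k : ℕ, if n < k then PN {k} * ENNReal.ofReal (s ^ n) else 0)
        = PN (Set.Ici (n + 1)) * ENNReal.ofReal (s ^ n) := by
      intro n
      have : ∀ k : ℕ, (if n < k then PN {k} * ENNReal.ofReal (s ^ n) else 0)
          = (if n + 1 ≤ k then PN {k} else 0) * ENNReal.ofReal (s ^ n) := by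
        intro k
        by_cases h : n < k
        · rw [if_pos h, if_pos (by omega)]
        · rw [if_neg h, if_neg (by omega), zero_mul]
      rw [tsum_congr this, ENNReal.tsum_mul_right, tsum_ite_measure]
    have e5 : ENNReal.ofReal (∑' n : ℕ, (PN (Set.Ici (n + 1))).toReal * s ^ n)
        = ∑' n : ℕ, PN (Set.Ici (n + 1)) * ENNReal.ofReal (s ^ n) := by
      rw [ENNReal.ofReal_tsum_of_nonneg
        (fun n => mul_nonneg ENNReal.toReal_nonneg (pow_nonneg h0 n))
        (summable_tail PN h0 h1)]
      exact tsum_congr fun n => by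
        rw [ENNReal.ofReal_mul ENNReal.toReal_nonneg,
          ENNReal.ofReal_toReal (measure_ne_top _ _)]
    have key : ENNReal.ofReal (∑' k, F k)
        = ENNReal.ofReal (∑' n : ℕ, (PN (Set.Ici (n + 1))).toReal * s ^ n) := by
      rw [e1, tsum_congr e2, ENNReal.tsum_comm, tsum_congr e4, e5]
    exact (ENNReal.ofReal_eq_ofReal_iff (tsum_nonneg hFnn)
      (tsum_nonneg fun n => mul_nonneg ENNReal.toReal_nonneg (pow_nonneg h0 n))).mp key
  rw [step1, tsum_congr step2, tsum_mul_left, step3]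
lemma hasSum_log_aux {s : ℝ} (h0 : 0 < s) (h1 : s < 1) :
    HasSum (fun n : ℕ => s ^ n / (n + 1)) (-Real.log (1 - s) / s) := by
  have h := Real.hasSum_pow_div_log_of_abs_lt_one (x := s) (by rw [abs_of_pos h0]; exact h1)
  have h2 := h.div_const s
  refine h2.congr_fun fun n => ?_
  rw [pow_succ]
  field_simp

variable (PN : Measure ℕ) [IsProbabilityMeasure PN]

lemma pgf_upper {M : ℝ} (hM : 0 < M)
    (hub : ∀ n : ℕ, 1 ≤ n → (PN (Set.Ici n)).toReal ≤ M / n)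
    {q : ℝ} (hq0 : 0 < q) (hq : q ≤ 1 / 2) :
    1 - pgf PN (1 - q) ≤ 2 * M * (q * Real.log (1 / q)) := by
  set s : ℝ := 1 - q with hs
  have h0 : (0:ℝ) < s := by rw [hs]; linarith
  have h1 : s < 1 := by rw [hs]; linarith
  have hls := hasSum_log_aux h0 h1
  have hlogq : 0 ≤ -Real.log q := by
    have := Real.log_nonpos hq0.le (by linarith : q ≤ 1)
    linarith
  have hS : ∑' n : ℕ, (PN (Set.Ici (n + 1))).toReal * s ^ n
      ≤ M * (-Real.log (1 - s) / s) := by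
    rw [← (hls.mul_left M).tsum_eq]
    refine Summable.tsum_le_tsum (fun n => ?_) (summable_tail PN h0.le h1)
      (hls.summable.mul_left M)
    have hb := hub (n + 1) (by omega)
    push_cast at hb
    calc (PN (Set.Ici (n + 1))).toReal * s ^ n ≤ (M / (n + 1)) * s ^ n :=
          mul_le_mul_of_nonneg_right hb (pow_nonneg h0.le n)
      _ = M * (s ^ n / (n + 1)) := by ring
  have h1s : 1 - s = q := by rw [hs]; ring
  rw [one_sub_pgf PN h0.le h1, h1s]
  have hdiv : -Real.log q / s ≤ 2 * (-Real.log q) := by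
    rw [div_le_iff₀ h0]
    nlinarith
  have hlog1q : Real.log (1 / q) = -Real.log q := by
    rw [one_div, Real.log_inv]
  rw [hlog1q]
  calc q * ∑' n : ℕ, (PN (Set.Ici (n + 1))).toReal * s ^ n
      ≤ q * (M * (-Real.log (1 - s) / s)) := by
        refine mul_le_mul_of_nonneg_left ?_ hq0.le
        exact hS
    _ = q * (M * (-Real.log q / s)) := by rw [h1s]
    _ ≤ q * (M * (2 * (-Real.log q))) :=
        mul_le_mul_of_nonneg_left (mul_le_mul_of_nonneg_left hdiv hM.le) hq0.le
    _ = 2 * M * (q * -Real.log q) := by ring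

lemma pgf_lower {ε : ℝ} (hε : 0 < ε)
    (hlb : ∀ n : ℕ, 1 ≤ n → ε / n ≤ (PN (Set.Ici n)).toReal)
    {q : ℝ} (hq0 : 0 < q) (hq1 : q < 1) :
    ε * (q * Real.log (1 / q)) ≤ 1 - pgf PN (1 - q) := by
  set s : ℝ := 1 - q with hs
  have h0 : (0:ℝ) < s := by rw [hs]; linarith
  have h1 : s < 1 := by rw [hs]; linarith
  have hls := hasSum_log_aux h0 h1
  have hlogq : 0 ≤ -Real.log q := by
    have := Real.log_nonpos hq0.le (by linarith : q ≤ 1)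
    linarith
  have hS : ε * (-Real.log (1 - s) / s)
      ≤ ∑' n : ℕ, (PN (Set.Ici (n + 1))).toReal * s ^ n := by
    rw [← (hls.mul_left ε).tsum_eq]
    refine Summable.tsum_le_tsum (fun n => ?_) (hls.summable.mul_left ε) (summable_tail PN h0.le h1)
    have hb := hlb (n + 1) (by omega)
    push_cast at hb
    calc ε * (s ^ n / (n + 1)) = (ε / (n + 1)) * s ^ n := by ring
      _ ≤ (PN (Set.Ici (n + 1))).toReal * s ^ n :=
          mul_le_mul_of_nonneg_right hb (pow_nonneg h0.le n)
  have h1s : 1 - s = q := by rw [hs]; ring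
  rw [one_sub_pgf PN h0.le h1, h1s]
  have hlog1q : Real.log (1 / q) = -Real.log q := by
    rw [one_div, Real.log_inv]
  rw [hlog1q]
  have hdiv : -Real.log q ≤ -Real.log q / s := by
    rw [le_div_iff₀ h0]
    nlinarith
  calc ε * (q * -Real.log q) ≤ ε * (q * (-Real.log q / s)) := by
        refine mul_le_mul_of_nonneg_left (mul_le_mul_of_nonneg_left hdiv hq0.le) hε.le
    _ = q * (ε * (-Real.log q / s)) := by ring
    _ = q * (ε * (-Real.log (1 - s) / s)) := by rw [h1s]
    _ ≤ q * ∑' n : ℕ, (PN (Set.Ici (n + 1))).toReal * s ^ n :=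
        mul_le_mul_of_nonneg_left hS hq0.le
lemma iio_eq (PR : Measure ℝ) [IsProbabilityMeasure PR] (t : ℝ) :
    (PR (Set.Iio t)).toReal = 1 - (PR (Set.Ici t)).toReal := by
  have h : PR (Set.Iio t) + PR (Set.Ici t) = 1 := by
    rw [← measure_union (Set.Iio_disjoint_Ici le_rfl) measurableSet_Ici,
      Set.Iio_union_Ici, measure_univ]
  have h2 := congrArg ENNReal.toReal h
  rw [ENNReal.toReal_add (measure_ne_top _ _) (measure_ne_top _ _)] at h2
  simp at h2
  linarith

lemma q_le_one (PR : Measure ℝ) [IsProbabilityMeasure PR] (t : ℝ) :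
    (PR (Set.Ici t)).toReal ≤ 1 := by
  calc (PR (Set.Ici t)).toReal ≤ (PR Set.univ).toReal :=
        ENNReal.toReal_mono (measure_ne_top _ _) (measure_mono (Set.subset_univ _))
    _ = 1 := by simp

end Aux

/-- **Theorem (parts 4 and 5)**: with `W := ∫_0^∞ (1 − G_N(P(R < t))) dt`:
(1) if `P(N ≥ n) ≤ M/n` for all `n ≥ 1` and `∫_0^∞ P(R ≥ t) ln(1/P(R ≥ t)) dt < +∞`
then `W < +∞`;
(2) if `P(N ≥ n) ≥ ε/n` for all `n ≥ 1` and `∫_0^∞ P(R ≥ t) ln(1/P(R ≥ t)) dt = +∞`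
then `W = +∞`.
(In Lean, `Real.log 0 = 0` and `1/0 = 0`, so the integrand `P(R ≥ t)·ln(1/P(R ≥ t))`
is automatically `0` at points where `P(R ≥ t) = 0`.) -/
theorem W_alpha_one
    (PN : Measure ℕ) (PR : Measure ℝ)
    [IsProbabilityMeasure PN] [IsProbabilityMeasure PR]
    -- `R` takes values in `[0, ∞)`
    (hRnonneg : PR (Set.Iio (0 : ℝ)) = 0) :
    -- (1)
    ((∃ M : ℝ, 0 < M ∧
        (∀ n : ℕ, 1 ≤ n → (PN (Set.Ici n)).toReal ≤ M / n) ∧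
        ∫⁻ t in Set.Ioi (0 : ℝ), ENNReal.ofReal
          ((PR (Set.Ici t)).toReal * Real.log (1 / (PR (Set.Ici t)).toReal)) < ⊤) →
      ∫⁻ t in Set.Ioi (0 : ℝ),
        ENNReal.ofReal (1 - pgf PN ((PR (Set.Iio t)).toReal)) < ⊤) ∧
    -- (2)
    ((∃ ε : ℝ, 0 < ε ∧
        (∀ n : ℕ, 1 ≤ n → ε / n ≤ (PN (Set.Ici n)).toReal) ∧
        ∫⁻ t in Set.Ioi (0 : ℝ), ENNReal.ofReal
          ((PR (Set.Ici t)).toReal * Real.log (1 / (PR (Set.Ici t)).toReal)) = ⊤) →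
      ∫⁻ t in Set.Ioi (0 : ℝ),
        ENNReal.ofReal (1 - pgf PN ((PR (Set.Iio t)).toReal)) = ⊤) := by
  set q : ℝ → ℝ := fun t => (PR (Set.Ici t)).toReal with hq
  have hq0 : ∀ t, 0 ≤ q t := fun t => ENNReal.toReal_nonneg
  have hq1 : ∀ t, q t ≤ 1 := fun t => q_le_one PR t
  have hiq : ∀ t, (PR (Set.Iio t)).toReal = 1 - q t := fun t => iio_eq PR t
  constructor
  · -- part 1
    rintro ⟨M, hM, hub, hfin⟩
    -- find n0 with q n0 ≤ 1/2
    have htend : Tendsto (fun n : ℕ => PR (Set.Ici (n : ℝ))) atTop (𝓝 0) := by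
      have h := tendsto_measure_iInter_atTop (μ := PR)
        (s := fun n : ℕ => Set.Ici (n : ℝ))
        (fun n => measurableSet_Ici.nullMeasurableSet)
        (fun a b hab => Set.Ici_subset_Ici.2 (by exact_mod_cast hab))
        ⟨0, measure_ne_top _ _⟩
      have hempty : (⋂ n : ℕ, Set.Ici ((n : ℝ))) = ∅ := by
        ext x
        simp only [Set.mem_iInter, Set.mem_Ici, Set.mem_empty_iff_false, iff_false, not_forall]
        obtain ⟨n, hn⟩ := exists_nat_gt x
        exact ⟨n, by push_neg; exact hn⟩
      rw [hempty, measure_empty] at h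
      exact h
    obtain ⟨n0, hn0⟩ : ∃ n0 : ℕ, PR (Set.Ici ((n0 : ℝ))) < ENNReal.ofReal (1 / 2) := by
      have := htend.eventually (gt_mem_nhds (by simp : (0:ℝ≥0∞) < ENNReal.ofReal (1 / 2)))
      exact this.exists
    have hqn0 : ∀ t : ℝ, (n0 : ℝ) < t → q t ≤ 1 / 2 := by
      intro t ht
      have hm : PR (Set.Ici t) ≤ PR (Set.Ici ((n0 : ℝ))) :=
        measure_mono (Set.Ici_subset_Ici.2 ht.le)
      have : PR (Set.Ici t) ≤ ENNReal.ofReal (1 / 2) := hm.trans hn0.le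
      calc q t ≤ (ENNReal.ofReal (1/2)).toReal :=
            ENNReal.toReal_mono ENNReal.ofReal_ne_top this
        _ = 1 / 2 := by rw [ENNReal.toReal_ofReal (by norm_num)]
    set f : ℝ → ℝ≥0∞ := fun t => ENNReal.ofReal (1 - pgf PN ((PR (Set.Iio t)).toReal)) with hf
    have hfle1 : ∀ t, f t ≤ 1 := by
      intro t
      rw [hf]
      calc ENNReal.ofReal (1 - pgf PN ((PR (Set.Iio t)).toReal)) ≤ ENNReal.ofReal 1 := by
            refine ENNReal.ofReal_le_ofReal ?_
            have := pgf_nonneg PN (s := (PR (Set.Iio t)).toReal) ENNReal.toReal_nonneg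
            linarith
        _ = 1 := by simp
    have hsplit : (∫⁻ t in Set.Ioi (0:ℝ), f t)
        ≤ (∫⁻ t in Set.Ioc (0:ℝ) (n0:ℝ), f t) + ∫⁻ t in Set.Ioi ((n0:ℝ)), f t := by
      have hsub : Set.Ioi (0:ℝ) ⊆ Set.Ioc (0:ℝ) (n0:ℝ) ∪ Set.Ioi ((n0:ℝ)) := by
        intro x hx
        rcases le_or_gt x (n0:ℝ) with h | h
        · exact Or.inl ⟨hx, h⟩
        · exact Or.inr h
      calc (∫⁻ t in Set.Ioi (0:ℝ), f t)
          ≤ ∫⁻ t in Set.Ioc (0:ℝ) (n0:ℝ) ∪ Set.Ioi ((n0:ℝ)), f t :=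
            lintegral_mono_set hsub
        _ ≤ _ := lintegral_union_le _ _ _
    have h1 : (∫⁻ t in Set.Ioc (0:ℝ) (n0:ℝ), f t) < ⊤ := by
      calc (∫⁻ t in Set.Ioc (0:ℝ) (n0:ℝ), f t)
          ≤ ∫⁻ _ in Set.Ioc (0:ℝ) (n0:ℝ), 1 := lintegral_mono fun t => hfle1 t
        _ = volume (Set.Ioc (0:ℝ) (n0:ℝ)) := by simp
        _ < ⊤ := by rw [Real.volume_Ioc]; exact ENNReal.ofReal_lt_top
    have h2 : (∫⁻ t in Set.Ioi ((n0:ℝ)), f t) < ⊤ := by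
      have hptw : ∀ t ∈ Set.Ioi ((n0:ℝ)), f t ≤ ENNReal.ofReal (2 * M) *
          ENNReal.ofReal (q t * Real.log (1 / q t)) := by
        intro t ht
        have hql : q t ≤ 1 / 2 := hqn0 t ht
        rcases eq_or_lt_of_le (hq0 t) with hq0' | hq0'
        · -- q t = 0, so Iio t has measure 1, pgf = 1, f t = 0
          have h5 : (PR (Set.Iio t)).toReal = 1 := by rw [hiq t, ← hq0']; ring
          show ENNReal.ofReal (1 - pgf PN ((PR (Set.Iio t)).toReal)) ≤ _
          simp only [h5, pgf_one PN, sub_self, ENNReal.ofReal_zero]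
          exact zero_le
        · show ENNReal.ofReal (1 - pgf PN ((PR (Set.Iio t)).toReal)) ≤ _
          rw [hiq t, ← ENNReal.ofReal_mul (by linarith)]
          exact ENNReal.ofReal_le_ofReal
            (pgf_upper PN hM hub hq0' hql)
      calc (∫⁻ t in Set.Ioi ((n0:ℝ)), f t)
          ≤ ∫⁻ t in Set.Ioi ((n0:ℝ)), ENNReal.ofReal (2 * M) *
              ENNReal.ofReal (q t * Real.log (1 / q t)) :=
            setLIntegral_mono' measurableSet_Ioi hptw
        _ = ENNReal.ofReal (2 * M) * ∫⁻ t in Set.Ioi ((n0:ℝ)),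
              ENNReal.ofReal (q t * Real.log (1 / q t)) :=
            lintegral_const_mul' _ _ ENNReal.ofReal_ne_top
        _ ≤ ENNReal.ofReal (2 * M) * ∫⁻ t in Set.Ioi (0:ℝ),
              ENNReal.ofReal (q t * Real.log (1 / q t)) := by
            refine mul_le_mul_right (lintegral_mono_set ?_) _
            exact Set.Ioi_subset_Ioi (by positivity)
        _ < ⊤ := ENNReal.mul_lt_top ENNReal.ofReal_lt_top hfin
    exact lt_of_le_of_lt hsplit (ENNReal.add_lt_top.2 ⟨h1, h2⟩)
  · -- part 2
    rintro ⟨ε, hε, hlb, hinf⟩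
    have hptw : ∀ t : ℝ, ENNReal.ofReal ε *
        ENNReal.ofReal (q t * Real.log (1 / q t))
        ≤ ENNReal.ofReal (1 - pgf PN ((PR (Set.Iio t)).toReal)) := by
      intro t
      rcases eq_or_lt_of_le (hq0 t) with hq0' | hq0'
      · -- q = 0 : LHS = 0
        rw [← hq0']
        simp
      rcases eq_or_lt_of_le (hq1 t) with hq1' | hq1'
      · -- q = 1 : log 1 = 0
        rw [hq1']
        simp
      · rw [← ENNReal.ofReal_mul hε.le, hiq t]
        exact ENNReal.ofReal_le_ofReal (pgf_lower PN hε hlb hq0' hq1')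
    have := lintegral_mono (μ := volume.restrict (Set.Ioi (0:ℝ))) hptw
    rw [lintegral_const_mul' _ _ ENNReal.ofReal_ne_top, hinf,
      ENNReal.mul_top (by simp [hε, ENNReal.ofReal_eq_zero, not_le])] at this
    exact top_le_iff.1 this

end
end

section
/- Let (N_i)_{i∈ℕ} be independent ℕ-valued random variables and let (t_{i,n})_{0≤i≤n} be an array of nonnegative real numbers such that for each fixed i, t_{i,n} → 1 as n → ∞. Then the event {∑_{n=0}^∞ ∏_{i=0}^n t_{i,n}^{N_i} < +∞} is a tail event with respect to the filtration (σ(N_i : i ≤ n))_n, and consequently its probability is either 0 or 1. -/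
open MeasureTheory ProbabilityTheory Filter Set
open scoped ENNReal NNReal

noncomputable section

/-- If `a n = c n * b n` eventually, with `a, b` nonnegative and `c → 1`, then
`a` is summable iff `b` is summable. -/
lemma summable_iff_of_eventually_eq_mul {a b c : ℕ → ℝ}
    (ha : ∀ n, 0 ≤ a n) (hb : ∀ n, 0 ≤ b n)
    (hc : Tendsto c atTop (nhds 1))
    (h : ∀ᶠ n in atTop, a n = c n * b n) :
    Summable a ↔ Summable b := by
  have hlo : ∀ᶠ n in atTop, (1/2 : ℝ) < c n :=
    hc.eventually (eventually_gt_nhds (by norm_num))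
  have hhi : ∀ᶠ n in atTop, c n < 2 :=
    hc.eventually (eventually_lt_nhds (by norm_num))
  constructor
  · intro hA
    refine summable_of_isBigO_nat hA (Asymptotics.IsBigO.of_bound 2 ?_)
    filter_upwards [h, hlo] with n hn hn2
    have hbn := hb n
    rw [Real.norm_of_nonneg hbn, Real.norm_of_nonneg (ha n), hn]
    nlinarith
  · intro hB
    refine summable_of_isBigO_nat hB (Asymptotics.IsBigO.of_bound 2 ?_)
    filter_upwards [h, hhi] with n hn hn2
    have hbn := hb n
    rw [Real.norm_of_nonneg hbn, Real.norm_of_nonneg (ha n), hn]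
    nlinarith

/-- **Remark (tail event)**: if `(N_i)` are independent `ℕ`-valued random variables and
`(t_{i,n})` is an array of nonnegative reals with `t_{i,n} → 1` as `n → ∞` for each fixed
`i`, then the event `{∑_n ∏_{i=0}^n t_{i,n}^{N_i} < +∞}` belongs to the tail σ-algebra
`⋂_k σ(N_i : i ≥ k)`, and consequently its probability is `0` or `1`. -/
theorem summability_event_is_tail
    {Ω : Type*} [MeasurableSpace Ω] (P : Measure Ω) [IsProbabilityMeasure P]
    (N : ℕ → Ω → ℕ) (hNmeas : ∀ i, Measurable (N i))
    (hNindep : iIndepFun N P)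
    (t : ℕ → ℕ → ℝ) (ht : ∀ i n, 0 ≤ t i n)
    (hlim : ∀ i, Filter.Tendsto (fun n => t i n) Filter.atTop (nhds 1)) :
    (∀ k : ℕ, MeasurableSet[⨆ i, ⨆ (_ : k ≤ i), MeasurableSpace.comap (N i) inferInstance]
      {ω | Summable (fun n : ℕ => ∏ i ∈ Finset.range (n + 1), t i n ^ N i ω)}) ∧
    (P {ω | Summable (fun n : ℕ => ∏ i ∈ Finset.range (n + 1), t i n ^ N i ω)} = 0 ∨
     P {ω | Summable (fun n : ℕ => ∏ i ∈ Finset.range (n + 1), t i n ^ N i ω)} = 1) := by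
  set mk : ℕ → MeasurableSpace Ω :=
    fun k => ⨆ i, ⨆ (_ : k ≤ i), MeasurableSpace.comap (N i) inferInstance with hmk
  have key : ∀ k : ℕ, MeasurableSet[mk k]
      {ω | Summable (fun n : ℕ => ∏ i ∈ Finset.range (n + 1), t i n ^ N i ω)} := by
    intro k
    -- the `ℝ≥0` version of the truncated product
    set f : ℕ → Ω → ℝ≥0 :=
      fun n ω => ∏ i ∈ Finset.Ico k (n + 1), (t i n).toNNReal ^ N i ω with hf
    have hset : {ω | Summable (fun n : ℕ => ∏ i ∈ Finset.range (n + 1), t i n ^ N i ω)}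
        = {ω | (∑' n, (f n ω : ℝ≥0∞)) ≠ ∞} := by
      ext ω
      simp only [mem_setOf_eq]
      rw [ENNReal.tsum_coe_ne_top_iff_summable]
      rw [← NNReal.summable_coe]
      have hcoe : ∀ n, ((f n ω : ℝ≥0) : ℝ) = ∏ i ∈ Finset.Ico k (n + 1), t i n ^ N i ω := by
        intro n
        push_cast [hf]
        exact Finset.prod_congr rfl fun i _ => by rw [Real.coe_toNNReal _ (ht i n)]
      rw [show (fun n => ((f n ω : ℝ≥0) : ℝ))
          = fun n => ∏ i ∈ Finset.Ico k (n + 1), t i n ^ N i ω from funext hcoe]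
      -- now compare the full product with the truncated one
      refine summable_iff_of_eventually_eq_mul
        (fun n => Finset.prod_nonneg fun i _ => pow_nonneg (ht i n) _)
        (fun n => Finset.prod_nonneg fun i _ => pow_nonneg (ht i n) _)
        (c := fun n => ∏ i ∈ Finset.range k, t i n ^ N i ω) ?_ ?_
      · have : Tendsto (fun n => ∏ i ∈ Finset.range k, t i n ^ N i ω) atTop
            (nhds (∏ i ∈ Finset.range k, (1 : ℝ) ^ N i ω)) :=
          tendsto_finset_prod _ fun i _ => (hlim i).pow _
        simpa using this
      · filter_upwards [eventually_ge_atTop k] with n hn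
        exact (Finset.prod_range_mul_prod_Ico _ (by omega)).symm
    rw [hset]
    have hFmeas : Measurable[mk k] fun ω => (∑' n, (f n ω : ℝ≥0∞)) := by
      refine Measurable.ennreal_tsum fun n => ?_
      simp only [hf, ENNReal.coe_finset_prod, ENNReal.coe_pow]
      refine Finset.measurable_prod _ fun i hi => ?_
      have hik : k ≤ i := (Finset.mem_Ico.1 hi).1
      have hNi : Measurable[mk k] (N i) := by
        refine Measurable.mono ?_ (le_iSup_of_le i (le_iSup_of_le hik le_rfl)) le_rfl
        exact fun s _ => ⟨s, trivial, rfl⟩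
      exact Measurable.comp (measurable_from_top
        (f := fun m : ℕ => (((t i n).toNNReal : ℝ≥0∞)) ^ m)) hNi
    exact (hFmeas (measurableSet_singleton ∞)).compl
  refine ⟨key, ?_⟩
  refine measure_zero_or_one_of_measurableSet_limsup_atTop
    (s := fun i => MeasurableSpace.comap (N i) inferInstance)
    (fun i => (hNmeas i).comap_le) hNindep.iIndep ?_
  rw [limsup_eq_iInf_iSup_of_nat]
  exact MeasurableSpace.measurableSet_iInf.2 key

end
end

section
/- Let (x_i)_{i∈ℕ} be a sequence of nonnegative real numbers and (y_i)_{i∈ℕ} a nondecreasing sequence of real numbers with y_0 > 0 and limsup_{n→∞} (∑_{i=0}^n x_i)/y_n > 0. Then ∑_{i=0}^∞ x_i = +∞ if and only if ∑_{i=0}^∞ x_i/y_i = +∞. -/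
open Filter
open scoped ENNReal Topology

/-- **Lemma (part 1)**: if `(x_i)` is nonnegative, `(y_i)` is nondecreasing with `y_0 > 0`
and `limsup_n (∑_{i=0}^n x_i)/y_n > 0` (the nonnegative quotients being viewed in `ℝ≥0∞`),
then `∑ x_i = +∞` if and only if `∑ x_i/y_i = +∞`. -/
theorem divergence_iff_divergence_of_ratios
    (x y : ℕ → ℝ) (hx : ∀ i, 0 ≤ x i) (hy : Monotone y) (hy0 : 0 < y 0)
    (hlimsup : 0 < Filter.limsup (fun n : ℕ =>
      ENNReal.ofReal ((∑ i ∈ Finset.range (n + 1), x i) / y n)) Filter.atTop) :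
    ¬ Summable x ↔ ¬ Summable (fun i => x i / y i) := by
  have hyi : ∀ i, 0 < y i := fun i => lt_of_lt_of_le hy0 (hy (Nat.zero_le i))
  constructor
  · -- hard direction
    intro hns hs
    by_cases hb : BddAbove (Set.range y)
    · obtain ⟨M, hM⟩ := hb
      apply hns
      apply Summable.of_nonneg_of_le hx (fun i => ?_) (hs.mul_right M)
      calc x i = (x i / y i) * y i := (div_mul_cancel₀ _ (hyi i).ne').symm
        _ ≤ (x i / y i) * M :=
            mul_le_mul_of_nonneg_left (hM ⟨i, rfl⟩) (div_nonneg (hx i) (hyi i).le)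
    · have ytop : Tendsto y atTop atTop := by
        apply tendsto_atTop_atTop_of_monotone hy
        intro b
        obtain ⟨z, ⟨i, rfl⟩, hz⟩ := not_bddAbove_iff.mp hb b
        exact ⟨i, hz.le⟩
      set S : ℕ → ℝ := fun n => ∑ i ∈ Finset.range (n + 1), x i with hS
      have key : Tendsto (fun n => S n / y n) atTop (𝓝 0) := by
        rw [Metric.tendsto_atTop]
        intro ε hε
        set s : ℕ → ℝ := fun n => ∑ i ∈ Finset.range n, x i / y i with hsdef
        set T : ℝ := ∑' i, x i / y i with hT
        obtain ⟨N, hN⟩ := Metric.tendsto_atTop.mp hs.hasSum.tendsto_sum_nat (ε/2)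
          (by positivity)
        set C : ℝ := ∑ i ∈ Finset.range N, x i with hC
        have htC : Tendsto (fun n => C / y n) atTop (𝓝 0) :=
          tendsto_const_nhds.div_atTop ytop
        obtain ⟨M, hM⟩ := Metric.tendsto_atTop.mp htC (ε/2) (by positivity)
        refine ⟨max N M, fun n hn => ?_⟩
        have hnN : N ≤ n := le_trans (le_max_left _ _) hn
        have hnM : M ≤ n := le_trans (le_max_right _ _) hn
        have hSn : S n = C + ∑ i ∈ Finset.Ico N (n + 1), x i := by
          rw [hS, hC]
          exact (Finset.sum_range_add_sum_Ico _ (by omega)).symm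
        have hSnonneg : 0 ≤ S n / y n :=
          div_nonneg (Finset.sum_nonneg fun i _ => hx i) (hyi n).le
        rw [Real.dist_eq, sub_zero, abs_of_nonneg hSnonneg]
        have htail : ∑ i ∈ Finset.Ico N (n + 1), x i / y n < ε / 2 := by
          have h1 : ∑ i ∈ Finset.Ico N (n + 1), x i / y n
              ≤ ∑ i ∈ Finset.Ico N (n + 1), x i / y i := by
            apply Finset.sum_le_sum
            intro i hi
            have hi' : i ≤ n := by
              have := (Finset.mem_Ico.mp hi).2; omega
            gcongr <;> first | exact hx i | exact hyi i | exact hy hi'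
          have h2 : ∑ i ∈ Finset.Ico N (n + 1), x i / y i ≤ T - s N := by
            have heq : s N + ∑ i ∈ Finset.Ico N (n + 1), x i / y i = s (n + 1) :=
              Finset.sum_range_add_sum_Ico _ (by omega)
            have h3 : s (n + 1) ≤ T :=
              Summable.sum_le_tsum (Finset.range (n + 1)) (fun i _ => div_nonneg (hx i) (hyi i).le) hs
            linarith
          have h4 : T - s N < ε / 2 := by
            have := hN N le_rfl
            rw [Real.dist_eq] at this
            have := abs_lt.mp this
            linarith [this.1]
          linarith
        have hC2 : C / y n < ε / 2 := by
          have := hM n hnM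
          rw [Real.dist_eq, sub_zero] at this
          calc C / y n ≤ |C / y n| := le_abs_self _
            _ < ε / 2 := this
        calc S n / y n = C / y n + (∑ i ∈ Finset.Ico N (n + 1), x i) / y n := by
              rw [hSn, add_div]
          _ = C / y n + ∑ i ∈ Finset.Ico N (n + 1), x i / y n := by
              congr 1; exact Finset.sum_div .. 
          _ < ε / 2 + ε / 2 := add_lt_add hC2 htail
          _ = ε := by ring
      have : Tendsto (fun n : ℕ =>
          ENNReal.ofReal ((∑ i ∈ Finset.range (n + 1), x i) / y n)) atTop (𝓝 0) := by
        have := (ENNReal.continuous_ofReal.tendsto 0).comp key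
        simp only [ENNReal.ofReal_zero] at this; exact this
      exact absurd this.limsup_eq hlimsup.ne'
  · intro hns h
    apply hns
    apply Summable.of_nonneg_of_le (fun i => div_nonneg (hx i) (hyi i).le)
      (fun i => ?_) (h.div_const (y 0))
    gcongr <;> first | exact hx i | exact hy0 | exact hy (Nat.zero_le i)
end
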